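/- arXiv:1909.13406 — 2 statements merged into one kernel-verified Lean document; each statement's English description precedes it below -/
import Mathlib

section
/- For all n ≥ 1 and all d ≥ 0: (a) if T_{n+1} has an open convex realization in ℝ^d, then T_n has an open convex realization in ℝ^d; and (b) if T_n has an open convex realization in ℝ^d, then T_{n+1} has an open convex realization in ℝ^{d+1}. (Hence the open embedding dimensions t_n := odim(T_n) satisfy t_n ≤ t_{n+1} ≤ t_n + 1.) -/
open Metric Set

/-- The combinatorial code of a collection of sets `U` in `X`: the set of
all `σ ⊆ [n]` such that some point `x ∈ X` lies in exactly the `U i` with `i ∈ σ`. -/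
def codeOf {n : ℕ} {X : Type*} (U : Fin n → Set X) : Set (Finset (Fin n)) :=
  {σ | ∃ x : X, ∀ i, i ∈ σ ↔ x ∈ U i}

/-- `C` has a realization by convex open sets in `ℝ^d`. -/
def HasOpenRealization (n : ℕ) (C : Set (Finset (Fin n))) (d : ℕ) : Prop :=
  ∃ U : Fin n → Set (EuclideanSpace ℝ (Fin d)),
    (∀ i, Convex ℝ (U i)) ∧ (∀ i, IsOpen (U i)) ∧ codeOf U = C

/-- The tangled sunflower code `T_n ⊆ 2^{[2n]}` (neurons `0,…,2n-1`, zero-indexed):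
codewords are the pairs `{2k, 2k+1}` for `k < n`, the set of even-indexed neurons,
the set of odd-indexed neurons, all singletons, and the empty set. -/
def Tcode (n : ℕ) : Set (Finset (Fin (2*n))) :=
  {σ | (∃ k : Fin n, σ = {⟨2*k.val, by omega⟩, ⟨2*k.val+1, by omega⟩})
     ∨ σ = Finset.univ.filter (fun i => i.val % 2 = 0)
     ∨ σ = Finset.univ.filter (fun i => i.val % 2 = 1)
     ∨ (∃ i, σ = {i})
     ∨ σ = ∅}

noncomputable section TangledAux

open Classical in
/-- The codeword (pattern) of a point. -/
noncomputable def patt {m : ℕ} {X : Type*} (U : Fin m → Set X) (x : X) : Finset (Fin m) :=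
  Finset.univ.filter (fun i => x ∈ U i)

lemma mem_patt {m : ℕ} {X : Type*} (U : Fin m → Set X) (x : X) (i : Fin m) :
    i ∈ patt U x ↔ x ∈ U i := by
  classical
  simp [patt]

lemma patt_mem_code {m : ℕ} {X : Type*} (U : Fin m → Set X) (x : X) :
    patt U x ∈ codeOf U := ⟨x, fun i => mem_patt U x i⟩

/-- Structure lemma: two distinct even indices in a codeword force the
"all evens, no odds" codeword. -/
lemma Tcode_two_evens {n : ℕ} {σ : Finset (Fin (2*n))} (hσ : σ ∈ Tcode n)
    {a b : Fin (2*n)} (hab : a ≠ b) (ha2 : a.val % 2 = 0) (hb2 : b.val % 2 = 0)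
    (ha : a ∈ σ) (hb : b ∈ σ) :
    (∀ c : Fin (2*n), c.val % 2 = 0 → c ∈ σ) ∧
    (∀ c : Fin (2*n), c.val % 2 = 1 → c ∉ σ) := by
  rcases hσ with ⟨k, hk⟩ | he | ho | ⟨j, hj⟩ | h0
  · subst hk
    simp only [Finset.mem_insert, Finset.mem_singleton, Fin.ext_iff] at ha hb
    exfalso
    apply hab
    apply Fin.ext
    omega
  · subst he
    constructor
    · intro c hc; simp [Finset.mem_filter, hc]
    · intro c hc; simp [Finset.mem_filter]; omega
  · subst ho
    simp only [Finset.mem_filter, Finset.mem_univ, true_and] at ha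
    omega
  · subst hj
    simp only [Finset.mem_singleton] at ha hb
    exact absurd (ha.trans hb.symm) hab
  · subst h0; simp at ha

/-- Structure lemma: an even and an odd index in a codeword force a pair codeword. -/
lemma Tcode_even_odd {n : ℕ} {σ : Finset (Fin (2*n))} (hσ : σ ∈ Tcode n)
    {a b : Fin (2*n)} (ha2 : a.val % 2 = 0) (hb2 : b.val % 2 = 1)
    (ha : a ∈ σ) (hb : b ∈ σ) :
    b.val = a.val + 1 ∧ ∀ c : Fin (2*n), c ≠ a → c ≠ b → c ∉ σ := by
  rcases hσ with ⟨k, hk⟩ | he | ho | ⟨j, hj⟩ | h0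
  · subst hk
    simp only [Finset.mem_insert, Finset.mem_singleton, Fin.ext_iff] at ha hb
    have hav : a.val = 2*k.val := by omega
    have hbv : b.val = 2*k.val + 1 := by omega
    refine ⟨by omega, fun c hca hcb hc => ?_⟩
    simp only [Finset.mem_insert, Finset.mem_singleton, Fin.ext_iff] at hc
    rcases hc with hc | hc
    · exact hca (Fin.ext (by omega))
    · exact hcb (Fin.ext (by omega))
  · subst he
    simp only [Finset.mem_filter, Finset.mem_univ, true_and] at hb
    omega
  · subst ho
    simp only [Finset.mem_filter, Finset.mem_univ, true_and] at ha
    omega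
  · subst hj
    simp only [Finset.mem_singleton] at ha hb
    subst ha; subst hb; omega
  · subst h0; simp at ha

private lemma partA (n d : ℕ) :
    HasOpenRealization (2*(n+1)) (Tcode (n+1)) d → HasOpenRealization (2*n) (Tcode n) d := by
  rintro ⟨W, hWc, hWo, hWcode⟩
  refine ⟨fun i => W ⟨i.val, by omega⟩, fun i => hWc _, fun i => hWo _, ?_⟩
  ext σ
  constructor
  · rintro ⟨x, hx⟩
    have hτ : patt W x ∈ Tcode (n+1) := hWcode ▸ patt_mem_code W x
    have hmem : ∀ i : Fin (2*n), i ∈ σ ↔ (⟨i.val, by omega⟩ : Fin (2*(n+1))) ∈ patt W x :=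
      fun i => (hx i).trans (mem_patt W x _).symm
    rcases hτ with ⟨k, hk⟩ | he | ho | ⟨j, hj⟩ | h0
    · by_cases hkn : k.val < n
      · refine Or.inl ⟨⟨k.val, hkn⟩, ?_⟩
        ext i
        rw [hmem i, hk]
        simp only [Finset.mem_insert, Finset.mem_singleton, Fin.ext_iff]
      · refine Or.inr (Or.inr (Or.inr (Or.inr ?_)))
        ext i
        rw [hmem i, hk]
        simp only [Finset.mem_insert, Finset.mem_singleton, Fin.ext_iff, Finset.notMem_empty,
          iff_false]
        have : i.val < 2*n := i.isLt
        omega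
    · refine Or.inr (Or.inl ?_)
      ext i
      rw [hmem i, he]
      simp only [Finset.mem_filter, Finset.mem_univ, true_and]
    · refine Or.inr (Or.inr (Or.inl ?_))
      ext i
      rw [hmem i, ho]
      simp only [Finset.mem_filter, Finset.mem_univ, true_and]
    · by_cases hjn : j.val < 2*n
      · refine Or.inr (Or.inr (Or.inr (Or.inl ⟨⟨j.val, hjn⟩, ?_⟩)))
        ext i
        rw [hmem i, hj]
        simp only [Finset.mem_singleton, Fin.ext_iff]
      · refine Or.inr (Or.inr (Or.inr (Or.inr ?_)))
        ext i
        rw [hmem i, hj]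
        simp only [Finset.mem_singleton, Fin.ext_iff, Finset.notMem_empty, iff_false]
        have : i.val < 2*n := i.isLt
        omega
    · refine Or.inr (Or.inr (Or.inr (Or.inr ?_)))
      ext i
      rw [hmem i, h0]
      simp
  · intro hσ
    have code : ∀ τ : Finset (Fin (2*(n+1))), τ ∈ Tcode (n+1) →
        ∃ x, ∀ j, j ∈ τ ↔ x ∈ W j := fun τ hτ => by
      have : τ ∈ codeOf W := hWcode.symm ▸ hτ
      exact this
    rcases hσ with ⟨k, hk⟩ | he | ho | ⟨j, hj⟩ | h0
    · obtain ⟨x, hx⟩ := code _ (Or.inl ⟨⟨k.val, by omega⟩, rfl⟩)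
      subst hk
      refine ⟨x, fun i => ?_⟩
      rw [← hx ⟨i.val, by omega⟩]
      simp only [Finset.mem_insert, Finset.mem_singleton, Fin.ext_iff]
    · obtain ⟨x, hx⟩ := code _ (Or.inr (Or.inl rfl))
      subst he
      refine ⟨x, fun i => ?_⟩
      rw [← hx ⟨i.val, by omega⟩]
      simp only [Finset.mem_filter, Finset.mem_univ, true_and]
    · obtain ⟨x, hx⟩ := code _ (Or.inr (Or.inr (Or.inl rfl)))
      subst ho
      refine ⟨x, fun i => ?_⟩
      rw [← hx ⟨i.val, by omega⟩]
      simp only [Finset.mem_filter, Finset.mem_univ, true_and]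
    · obtain ⟨x, hx⟩ := code _ (Or.inr (Or.inr (Or.inr (Or.inl ⟨⟨j.val, by omega⟩, rfl⟩))))
      subst hj
      refine ⟨x, fun i => ?_⟩
      rw [← hx ⟨i.val, by omega⟩]
      simp only [Finset.mem_singleton, Fin.ext_iff]
    · obtain ⟨x, hx⟩ := code _ (Or.inr (Or.inr (Or.inr (Or.inr rfl))))
      subst h0
      refine ⟨x, fun i => ?_⟩
      rw [← hx ⟨i.val, by omega⟩]
      simp



/-! ### Geometry infrastructure for part (b) -/

abbrev Euc (d : ℕ) := EuclideanSpace ℝ (Fin d)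

variable {d : ℕ}

/-- The "one-sided tent" over a set `S`: at height `t > -1` its slice is the erosion
of `S` at depth `t+1`. -/
def gad (S : Set (Euc d)) : Set (Euc d × ℝ) :=
  {p | -1 < p.2 ∧ closedBall p.1 (p.2 + 1) ⊆ S}

lemma gad_center {S : Set (Euc d)} {p : Euc d × ℝ} (hp : p ∈ gad (d := d) S) : p.1 ∈ S :=
  hp.2 (mem_closedBall_self (by linarith [hp.1]))

lemma gad_mono {S S' : Set (Euc d)} (h : S ⊆ S') : gad (d := d) S ⊆ gad S' :=
  fun _ hp => ⟨hp.1, hp.2.trans h⟩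

lemma gad_convex {S : Set (Euc d)} (hS : Convex ℝ S) : Convex ℝ (gad (d := d) S) := by
  rintro p hp q hq a b ha hb hab
  have hr1 : (0:ℝ) < p.2 + 1 := by linarith [hp.1]
  have hr2 : (0:ℝ) < q.2 + 1 := by linarith [hq.1]
  have hr : 0 < a * (p.2 + 1) + b * (q.2 + 1) := by
    rcases ha.lt_or_eq with ha' | ha'
    · have := mul_pos ha' hr1
      nlinarith [mul_nonneg hb hr2.le]
    · have hb1 : b = 1 := by linarith
      rw [← ha', hb1]; simpa using hr2
  have hsnd : (a • p + b • q).2 = a * p.2 + b * q.2 := by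
    simp [Prod.add_def, Prod.smul_def, smul_eq_mul]
  have hfst : (a • p + b • q).1 = a • p.1 + b • q.1 := by
    simp [Prod.add_def, Prod.smul_def]
  constructor
  · rw [hsnd]; nlinarith
  · intro y hy
    set r : ℝ := a * (p.2+1) + b * (q.2+1) with hrdef
    clear_value r
    have hyr : ‖y - (a • p.1 + b • q.1)‖ ≤ r := by
      rw [mem_closedBall_iff_norm, hfst, hsnd] at hy
      have hr' : a * p.2 + b * q.2 + 1 = r := by rw [hrdef]; linear_combination (-1 : ℝ) * hab
      linarith
    set v := y - (a • p.1 + b • q.1) with hv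
    have hy' : y = a • (p.1 + ((p.2+1)/r) • v) + b • (q.1 + ((q.2+1)/r) • v) := by
      have : a • (((p.2+1)/r) • v) + b • (((q.2+1)/r) • v) = v := by
        rw [smul_smul, smul_smul, ← add_smul]
        have h1 : a * ((p.2 + 1) / r) + b * ((q.2 + 1) / r) = 1 := by
          rw [mul_div_assoc', mul_div_assoc', ← add_div, hrdef,
            div_self (by rw [← hrdef]; exact hr.ne')]
        rw [h1, one_smul]
      calc y = (a • p.1 + b • q.1) + v := by rw [hv]; abel
      _ = (a • p.1 + b • q.1) + (a • ((p.2+1)/r) • v + b • ((q.2+1)/r) • v) := by rw [this]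
      _ = a • (p.1 + ((p.2+1)/r) • v) + b • (q.1 + ((q.2+1)/r) • v) := by
          rw [smul_add, smul_add]; abel
    rw [hy']
    refine hS (hp.2 ?_) (hq.2 ?_) ha hb hab
    · rw [mem_closedBall_iff_norm]
      have : ‖p.1 + ((p.2+1)/r) • v - p.1‖ = (p.2+1)/r * ‖v‖ := by
        rw [add_sub_cancel_left, norm_smul, Real.norm_eq_abs,
          abs_of_nonneg (by positivity)]
      rw [this]
      rw [div_mul_eq_mul_div, div_le_iff₀ hr]
      exact mul_le_mul_of_nonneg_left hyr hr1.le
    · rw [mem_closedBall_iff_norm]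
      have : ‖q.1 + ((q.2+1)/r) • v - q.1‖ = (q.2+1)/r * ‖v‖ := by
        rw [add_sub_cancel_left, norm_smul, Real.norm_eq_abs,
          abs_of_nonneg (by positivity)]
      rw [this]
      rw [div_mul_eq_mul_div, div_le_iff₀ hr]
      exact mul_le_mul_of_nonneg_left hyr hr2.le

lemma ballgrow (x : Euc d) (r ε : ℝ) (hr : 0 ≤ r) (hε : 0 < ε) :
    closedBall x (r + ε) ⊆ Metric.thickening (2*ε) (closedBall x r) := by
  intro y hy
  rw [mem_closedBall_iff_norm] at hy
  set z := x + (r/(r+ε)) • (y - x) with hz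
  have hzb : z ∈ closedBall x r := by
    rw [mem_closedBall_iff_norm, hz, add_sub_cancel_left, norm_smul, Real.norm_eq_abs,
      abs_of_nonneg (by positivity)]
    rw [div_mul_eq_mul_div, div_le_iff₀ (by linarith)]
    nlinarith
  refine Metric.mem_thickening_iff.2 ⟨z, hzb, ?_⟩
  rw [dist_eq_norm]
  have : y - z = (ε/(r+ε)) • (y - x) := by
    rw [hz]
    have h1 : (ε/(r+ε)) + (r/(r+ε)) = 1 := by field_simp; ring
    calc y - (x + (r / (r + ε)) • (y - x)) = (y - x) - (r/(r+ε)) • (y-x) := by abel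
    _ = ((ε/(r+ε)) + (r/(r+ε))) • (y-x) - (r/(r+ε)) • (y-x) := by rw [h1, one_smul]
    _ = (ε/(r+ε)) • (y - x) := by rw [add_smul]; abel
  rw [this, norm_smul, Real.norm_eq_abs, abs_of_nonneg (by positivity)]
  have h2 : ε/(r+ε) * ‖y - x‖ ≤ ε/(r+ε) * (r + ε) := by
    apply mul_le_mul_of_nonneg_left hy (by positivity)
  have h3 : ε/(r+ε) * (r+ε) = ε := by field_simp
  nlinarith

lemma gad_open {S : Set (Euc d)} (hS : IsOpen S) : IsOpen (gad (d := d) S) := by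
  rw [isOpen_iff_forall_mem_open]
  rintro p ⟨hpt, hpb⟩
  obtain ⟨δ, hδ, hth⟩ := (isCompact_closedBall p.1 (p.2+1)).exists_thickening_subset_open hS hpb
  refine ⟨(Prod.fst ⁻¹' ball p.1 (δ/4)) ∩ (Prod.snd ⁻¹' (Ioo (p.2 - δ/4) (p.2 + δ/4))) ∩
    (Prod.snd ⁻¹' Ioi (-1)), ?_, ?_, ?_⟩
  · rintro q ⟨⟨hq1, hq2⟩, hq3⟩
    simp only [Set.mem_preimage, Metric.mem_ball, Set.mem_Ioo, Set.mem_Ioi] at hq1 hq2 hq3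
    refine ⟨hq3, ?_⟩
    have hsub1 : closedBall q.1 (q.2 + 1) ⊆ closedBall p.1 (p.2 + 1 + δ/2) := by
      apply closedBall_subset_closedBall'
      linarith [hq1, hq2.2]
    refine hsub1.trans ?_
    have hgrow := ballgrow p.1 (p.2+1) (δ/2) (by linarith) (by linarith)
    rw [show p.2 + 1 + δ/2 = p.2 + 1 + δ/2 by ring] at hgrow
    refine hgrow.trans ?_
    rw [show 2*(δ/2) = δ by ring]
    exact hth
  · exact ((continuous_fst.isOpen_preimage _ isOpen_ball).inter
      (continuous_snd.isOpen_preimage _ isOpen_Ioo)).inter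
      (continuous_snd.isOpen_preimage _ isOpen_Ioi)
  · refine ⟨⟨?_, ?_⟩, ?_⟩ <;>
      simp only [Set.mem_preimage, Metric.mem_ball, Set.mem_Ioo, Set.mem_Ioi]
    · simpa using by positivity
    · constructor <;> linarith
    · exact hpt

/-- The deep blob: a product box far below the tents. -/
def blob (d : ℕ) (R : ℝ) : Set (Euc d × ℝ) :=
  (ball (0 : Euc d) 1) ×ˢ (Ioo (-(R+4)) (-(R+3)))

lemma blob_convex (R : ℝ) : Convex ℝ (blob d R) :=
  (convex_ball _ _).prod (convex_Ioo _ _)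

lemma blob_open (R : ℝ) : IsOpen (blob d R) :=
  isOpen_ball.prod isOpen_Ioo

lemma blob_mem_iff {R : ℝ} {p : Euc d × ℝ} :
    p ∈ blob d R ↔ ‖p.1‖ < 1 ∧ (-(R+4) < p.2 ∧ p.2 < -(R+3)) := by
  simp [blob, Set.mem_prod, mem_ball, dist_zero_right]

lemma blob_nonempty (R : ℝ) : ((0 : Euc d), -(R+3)-1/2) ∈ blob d R := by
  rw [blob_mem_iff]
  constructor
  · simpa using one_pos
  · constructor <;> [linarith; linarith]

/-- The new convex open sets: join of a tent over `P` with the deep blob. -/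
def VV (P : Set (Euc d)) (R : ℝ) : Set (Euc d × ℝ) :=
  convexJoin ℝ (gad P) (blob d R)

lemma VV_convex {P : Set (Euc d)} (hP : Convex ℝ P) (R : ℝ) : Convex ℝ (VV P R) :=
  (gad_convex hP).convexJoin (blob_convex R)

lemma gad_subset_VV {P : Set (Euc d)} {R : ℝ} : gad (d := d) P ⊆ VV P R := by
  intro a ha
  exact mem_convexJoin.2 ⟨a, ha, _, blob_nonempty R, left_mem_segment ℝ _ _⟩

lemma blob_subset_VV {P : Set (Euc d)} {R : ℝ} (hP : (gad (d := d) P).Nonempty) :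
    blob d R ⊆ VV P R := by
  intro b hb
  exact mem_convexJoin.2 ⟨_, hP.choose_spec, b, hb, right_mem_segment ℝ _ _⟩

lemma VV_open {P : Set (Euc d)} (hPo : IsOpen P) {R : ℝ} : IsOpen (VV P R) := by
  rw [isOpen_iff_forall_mem_open]
  intro p hp
  obtain ⟨a, ha, b, hb, u, v, hu, hv, huv, hp'⟩ := mem_convexJoin.1 hp
  rcases eq_or_lt_of_le hv with hv1 | hv1
  · -- v could be anything; u = 0 case when v = ... careful: hv : 0 ≤ v, so hv1 : 0 = v
    -- v = 0: p = a ∈ gad P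
    have hu1 : u = 1 := by linarith
    have hpa : p = a := by rw [← hp', ← hv1, hu1]; simp
    exact ⟨gad P, gad_subset_VV, gad_open hPo, hpa ▸ ha⟩
  · -- v > 0 : use the b-side affine chart if u = 0, else a-side
    rcases eq_or_lt_of_le hu with hu0 | hu0
    · have hv1' : v = 1 := by linarith
      have hpb : p = b := by rw [← hp', ← hu0, hv1']; simp
      exact ⟨blob d R, blob_subset_VV ⟨a, ha⟩, blob_open R, hpb ▸ hb⟩
    · refine ⟨(fun q => u⁻¹ • (q - v • b)) ⁻¹' gad P, ?_, ?_, ?_⟩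
      · intro q hq
        refine mem_convexJoin.2 ⟨u⁻¹ • (q - v • b), hq, b, hb, u, v, hu, hv, huv, ?_⟩
        rw [smul_inv_smul₀ (ne_of_gt hu0)]
        abel
      · exact IsOpen.preimage ((continuous_id.sub continuous_const).const_smul u⁻¹) (gad_open hPo)
      · simp only [Set.mem_preimage]
        have : u⁻¹ • (p - v • b) = a := by
          rw [← hp']
          rw [add_sub_cancel_right, inv_smul_smul₀ (ne_of_gt hu0)]
        rw [this]; exact ha

lemma VV_tlb {P : Set (Euc d)} {R : ℝ} (hR : 0 ≤ R) {p : Euc d × ℝ} (hp : p ∈ VV P R) :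
    -(R+4) < p.2 := by
  obtain ⟨a, ha, b, hb, u, v, hu, hv, huv, hp'⟩ := mem_convexJoin.1 hp
  have h1 : -1 < a.2 := ha.1
  have h2 : -(R+4) < b.2 := (blob_mem_iff.1 hb).2.1
  have hsnd : p.2 = u * a.2 + v * b.2 := by
    rw [← hp']; simp [Prod.add_def, Prod.smul_def, smul_eq_mul]
  rcases eq_or_lt_of_le hv with hv0 | hv0
  · have hu1 : u = 1 := by linarith
    rw [hsnd, ← hv0, hu1]
    simp only [one_mul, zero_mul, add_zero]
    linarith
  · have e1 : u * (-1) ≤ u * a.2 := mul_le_mul_of_nonneg_left h1.le hu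
    have e2 : v * (-(R+4)) < v * b.2 := mul_lt_mul_of_pos_left h2 hv0
    rw [hsnd]; nlinarith

/-- Key lemma: any point of `VV P R` carries a certificate ball inside `P`
of radius `p.2 + 1`. -/
lemma VV_alive {P : Set (Euc d)} {R : ℝ} (hPb : P ⊆ ball 0 R)
    {p : Euc d × ℝ} (hp : p ∈ VV P R) :
    closedBall p.1 (p.2 + 1) ⊆ P := by
  obtain ⟨a, ha, b, hb, u, v, hu, hv, huv, hp'⟩ := mem_convexJoin.1 hp
  rcases eq_or_lt_of_le hv with hv0 | hv0
  · have hu1 : u = 1 := by linarith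
    have hpa : p = a := by rw [← hp', ← hv0, hu1]; simp
    rw [hpa]; exact ha.2
  · -- v > 0
    have haP : a.1 ∈ P := gad_center ha
    have haR : ‖a.1‖ < R := by simpa [dist_zero_right] using hPb haP
    have hbR : ‖b.1‖ < 1 := (blob_mem_iff.1 hb).1
    have hb2 : b.2 < -(R+3) := (blob_mem_iff.1 hb).2.2
    have ha2 : -1 < a.2 := ha.1
    have hfst : p.1 = u • a.1 + v • b.1 := by rw [← hp']; simp [Prod.add_def, Prod.smul_def]
    have hsnd : p.2 = u * a.2 + v * b.2 := by
      rw [← hp']; simp [Prod.add_def, Prod.smul_def, smul_eq_mul]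
    have hdist : dist p.1 a.1 ≤ v * (a.2 - b.2) := by
      have : p.1 - a.1 = v • (b.1 - a.1) := by
        rw [hfst]
        have hu1 : u = 1 - v := by linarith
        rw [hu1, sub_smul, one_smul, smul_sub]
        abel
      rw [dist_eq_norm, this, norm_smul, Real.norm_eq_abs, abs_of_nonneg hv]
      have hnorm : ‖b.1 - a.1‖ ≤ a.2 - b.2 := by
        calc ‖b.1 - a.1‖ ≤ ‖b.1‖ + ‖a.1‖ := norm_sub_le _ _
        _ ≤ a.2 - b.2 := by linarith
      exact mul_le_mul_of_nonneg_left hnorm hv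
    refine (closedBall_subset_closedBall' ?_).trans ha.2
    have : p.2 + 1 + dist p.1 a.1 ≤ p.2 + 1 + v * (a.2 - b.2) := by linarith
    refine this.trans ?_
    have : v * (a.2 - b.2) = a.2 - p.2 := by rw [hsnd]; linear_combination a.2 * huv
    rw [this]
    linarith

/-! ### Transfer between `ℝ^{d+1}` and `ℝ^d × ℝ` -/

/-- Splitting off the last coordinate, as a linear equivalence on plain functions. -/
noncomputable def funSplit (d : ℕ) : (Fin (d+1) → ℝ) ≃ₗ[ℝ] (Fin d → ℝ) × ℝ where
  toFun v := (fun i => v i.castSucc, v (Fin.last d))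
  invFun w := Fin.snoc w.1 w.2
  map_add' u v := rfl
  map_smul' c v := rfl
  left_inv v := by
    funext i
    refine Fin.lastCases ?_ (fun j => ?_) i
    · simp [Fin.snoc_last]
    · simp [Fin.snoc_castSucc]
  right_inv w := by
    refine Prod.ext ?_ ?_
    · funext i; simp [Fin.snoc_castSucc]
    · simp [Fin.snoc_last]

/-- Splitting off the last coordinate of Euclidean space. -/
noncomputable def eucSplit (d : ℕ) :
    EuclideanSpace ℝ (Fin (d+1)) ≃L[ℝ] (Euc d) × ℝ :=
  LinearEquiv.toContinuousLinearEquiv <|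
    (WithLp.linearEquiv 2 ℝ (Fin (d+1) → ℝ)).trans <|
      (funSplit d).trans
        (((WithLp.linearEquiv 2 ℝ (Fin d → ℝ)).symm).prodCongr (LinearEquiv.refl ℝ ℝ))

lemma transfer_realization {m d : ℕ} (C : Set (Finset (Fin m)))
    (h : ∃ W : Fin m → Set (Euc d × ℝ),
      (∀ i, Convex ℝ (W i)) ∧ (∀ i, IsOpen (W i)) ∧ codeOf W = C) :
    HasOpenRealization m C (d+1) := by
  obtain ⟨W, hWc, hWo, hWcode⟩ := h
  set e := eucSplit d with he
  refine ⟨fun i => (⇑e) ⁻¹' (W i), fun i => ?_, fun i => ?_, ?_⟩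
  · exact (hWc i).linear_preimage e.toLinearEquiv.toLinearMap
  · exact (hWo i).preimage e.continuous
  · rw [← hWcode]
    ext σ
    constructor
    · rintro ⟨x, hx⟩
      exact ⟨e x, fun i => hx i⟩
    · rintro ⟨p, hp⟩
      refine ⟨e.symm p, fun i => ?_⟩
      rw [hp i]
      simp only [Set.mem_preimage, ContinuousLinearEquiv.apply_symm_apply]

/-! ### Bounded realizations -/

lemma bounded_realization {n d : ℕ} (h : HasOpenRealization (2*n) (Tcode n) d) :
    ∃ (U : Fin (2*n) → Set (Euc d)) (R : ℝ), 1 ≤ R ∧ (∀ i, Convex ℝ (U i)) ∧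
      (∀ i, IsOpen (U i)) ∧ codeOf U = Tcode n ∧ ∀ i, U i ⊆ ball 0 R := by
  classical
  obtain ⟨U0, hc, ho, hcd⟩ := h
  set w : Finset (Fin (2*n)) → Euc d :=
    fun σ => if h : σ ∈ codeOf U0 then h.choose else 0 with hw
  have hne : (Finset.univ : Finset (Finset (Fin (2*n)))).Nonempty := Finset.univ_nonempty
  set R : ℝ := 1 + Finset.univ.sup' hne (fun σ => ‖w σ‖) with hR
  have hRw : ∀ σ, ‖w σ‖ < R := by
    intro σ
    have := Finset.le_sup' (fun σ => ‖w σ‖) (Finset.mem_univ σ)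
    rw [hR]; linarith
  have hR1 : 1 ≤ R := by
    have : (0:ℝ) ≤ Finset.univ.sup' hne (fun σ => ‖w σ‖) :=
      le_trans (norm_nonneg (w ∅)) (Finset.le_sup' (fun σ => ‖w σ‖) (Finset.mem_univ ∅))
    rw [hR]; linarith
  refine ⟨fun i => U0 i ∩ ball 0 R, R, hR1, fun i => (hc i).inter (convex_ball _ _),
    fun i => (ho i).inter isOpen_ball, ?_, fun i => Set.inter_subset_right⟩
  ext σ
  constructor
  · rintro ⟨x, hx⟩
    by_cases hxR : x ∈ ball (0 : Euc d) R
    · have : σ ∈ codeOf U0 := ⟨x, fun i => (hx i).trans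
        (by simp only [Set.mem_inter_iff, and_iff_left hxR])⟩
      rwa [hcd] at this
    · have : σ = ∅ := by
        ext i
        simp only [Finset.notMem_empty, iff_false]
        intro hi
        exact hxR ((hx i).1 hi).2
      rw [this]
      exact Or.inr (Or.inr (Or.inr (Or.inr rfl)))
  · intro hσ
    have hσ' : σ ∈ codeOf U0 := by rwa [hcd]
    have hxw : w σ = hσ'.choose := by rw [hw]; simp [hσ']
    have hspec := hσ'.choose_spec
    refine ⟨hσ'.choose, fun i => (hspec i).trans ?_⟩
    simp only [Set.mem_inter_iff, iff_self_and]
    intro _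
    rw [← hxw]
    simpa [dist_zero_right] using hRw σ

/-! ### The core construction for part (b) -/

lemma VV_center {P : Set (Euc d)} {R : ℝ} (hPb : P ⊆ ball 0 R)
    {p : Euc d × ℝ} (hp : p ∈ VV P R) (ht : -1 ≤ p.2) : p.1 ∈ P :=
  VV_alive hPb hp (mem_closedBall_self (by linarith))

lemma exists_closedBall_subset {S : Set (Euc d)} (hS : IsOpen S) {x : Euc d} (hx : x ∈ S) :
    ∃ ε > 0, closedBall x ε ⊆ S := by
  obtain ⟨ε, hε, hb⟩ := Metric.isOpen_iff.1 hS x hx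
  exact ⟨ε/2, by linarith, (closedBall_subset_ball (by linarith)).trans hb⟩

/-- Data providing the bases `P`, `Q` for the two new sets. -/
structure PQW (n d : ℕ) (U : Fin (2*n) → Set (Euc d)) (R : ℝ) where
  P : Set (Euc d)
  Q : Set (Euc d)
  convP : Convex ℝ P
  openP : IsOpen P
  convQ : Convex ℝ Q
  openQ : IsOpen Q
  bndP : P ⊆ ball 0 R
  bndQ : Q ⊆ ball 0 R
  neP : P.Nonempty
  neQ : Q.Nonempty
  subP : ∀ i : Fin (2*n), i.val % 2 = 0 → P ⊆ U i
  subQ : ∀ i : Fin (2*n), i.val % 2 = 1 → Q ⊆ U i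
  disPU : ∀ i : Fin (2*n), i.val % 2 = 1 → ∀ x, x ∈ P → x ∈ U i → False
  disQU : ∀ i : Fin (2*n), i.val % 2 = 0 → ∀ x, x ∈ Q → x ∈ U i → False
  disPQ : ∀ x, x ∈ P → x ∈ Q → False
  coverP : ∀ (x : Euc d) (δ : ℝ) (a b : Fin (2*n)), a ≠ b → a.val % 2 = 0 → b.val % 2 = 0 →
      closedBall x δ ⊆ U a → closedBall x δ ⊆ U b → closedBall x δ ⊆ P
  coverQ : ∀ (x : Euc d) (δ : ℝ) (a b : Fin (2*n)), a ≠ b → a.val % 2 = 1 → b.val % 2 = 1 →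
      closedBall x δ ⊆ U a → closedBall x δ ⊆ U b → closedBall x δ ⊆ Q
  pairW : ∀ k : Fin n, ∃ x, (∀ i : Fin (2*n), x ∈ U i ↔ (i.val = 2*k.val ∨ i.val = 2*k.val+1))
      ∧ x ∉ P ∧ x ∉ Q
  singW : ∀ j : Fin (2*n), ∃ x, (∀ i : Fin (2*n), x ∈ U i ↔ i = j) ∧ x ∉ P ∧ x ∉ Q
  emptyW : ∃ x : Euc d, ∀ i : Fin (2*n), x ∉ U i

/-- The realization of `T (n+1)` in `ℝ^d × ℝ`. -/
def Wfun (n : ℕ) {d : ℕ} (U : Fin (2*n) → Set (Euc d)) (P Q : Set (Euc d)) (R : ℝ) :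
    Fin (2*(n+1)) → Set (Euc d × ℝ) := fun i =>
  if h : i.val < 2*n then gad (U ⟨i.val, h⟩) else if i.val = 2*n then VV P R else VV Q R

lemma Wfun_lt {n d : ℕ} {U : Fin (2*n) → Set (Euc d)} {P Q : Set (Euc d)} {R : ℝ}
    (i : Fin (2*(n+1))) (h : i.val < 2*n) : Wfun n U P Q R i = gad (U ⟨i.val, h⟩) := by
  simp only [Wfun]; rw [dif_pos h]

lemma Wfun_E {n d : ℕ} {U : Fin (2*n) → Set (Euc d)} {P Q : Set (Euc d)} {R : ℝ}
    (i : Fin (2*(n+1))) (h : i.val = 2*n) : Wfun n U P Q R i = VV P R := by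
  simp only [Wfun]; rw [dif_neg (by omega), if_pos h]

lemma Wfun_O {n d : ℕ} {U : Fin (2*n) → Set (Euc d)} {P Q : Set (Euc d)} {R : ℝ}
    (i : Fin (2*(n+1))) (h : i.val = 2*n+1) : Wfun n U P Q R i = VV Q R := by
  simp only [Wfun]; rw [dif_neg (by omega), if_neg (by omega)]

lemma partB_core {n d : ℕ} (U : Fin (2*n) → Set (Euc d))
    (hUc : ∀ i, Convex ℝ (U i)) (hUo : ∀ i, IsOpen (U i)) (hcode : codeOf U = Tcode n)
    (R : ℝ) (hR : 1 ≤ R) (pq : PQW n d U R) :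
    ∃ W : Fin (2*(n+1)) → Set (Euc d × ℝ),
      (∀ i, Convex ℝ (W i)) ∧ (∀ i, IsOpen (W i)) ∧ codeOf W = Tcode (n+1) := by
  classical
  obtain ⟨c, hc0⟩ := pq.neP
  obtain ⟨ρ, hρ, hcballP⟩ := exists_closedBall_subset pq.openP hc0
  have hcP : c ∈ pq.P := hcballP (mem_closedBall_self hρ.le)
  have hgadPne : ((c, -1+ρ) : Euc d × ℝ) ∈ gad (d := d) pq.P := by
    refine ⟨by simp; linarith, ?_⟩
    simpa [show (-1+ρ:ℝ) + 1 = ρ by ring] using hcballP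
  obtain ⟨c', hc0'⟩ := pq.neQ
  obtain ⟨ρ', hρ', hcballQ⟩ := exists_closedBall_subset pq.openQ hc0'
  have hcQ : c' ∈ pq.Q := hcballQ (mem_closedBall_self hρ'.le)
  have hgadQne : ((c', -1+ρ') : Euc d × ℝ) ∈ gad (d := d) pq.Q := by
    refine ⟨by simp; linarith, ?_⟩
    simpa [show (-1+ρ':ℝ) + 1 = ρ' by ring] using hcballQ
  refine ⟨Wfun n U pq.P pq.Q R, ?_, ?_, ?_⟩
  · intro i
    by_cases h : i.val < 2*n
    · rw [Wfun_lt i h]; exact gad_convex (hUc _)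
    · by_cases h' : i.val = 2*n
      · rw [Wfun_E i h']; exact VV_convex pq.convP R
      · rw [Wfun_O i (by omega)]; exact VV_convex pq.convQ R
  · intro i
    by_cases h : i.val < 2*n
    · rw [Wfun_lt i h]; exact gad_open (hUo _)
    · by_cases h' : i.val = 2*n
      · rw [Wfun_E i h']; exact VV_open pq.openP
      · rw [Wfun_O i (by omega)]; exact VV_open pq.openQ
  · ext σ
    constructor
    · rintro ⟨p, hp⟩
      by_cases halive : -1 < p.2
      · by_cases hPmem : p ∈ VV pq.P R
        · -- the all-evens codeword
          refine Or.inr (Or.inl ?_)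
          have hball := VV_alive pq.bndP hPmem
          have hctr : p.1 ∈ pq.P := VV_center pq.bndP hPmem halive.le
          ext i
          rw [hp i]
          simp only [Finset.mem_filter, Finset.mem_univ, true_and]
          by_cases h : i.val < 2*n
          · rw [Wfun_lt i h]
            constructor
            · intro hgad
              by_contra hpar
              have hodd : i.val % 2 = 1 := by omega
              exact pq.disPU ⟨i.val, h⟩ hodd p.1 hctr (gad_center hgad)
            · intro hpar
              exact ⟨halive, hball.trans (pq.subP ⟨i.val, h⟩ hpar)⟩
          · by_cases h' : i.val = 2*n
            · rw [Wfun_E i h']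
              constructor
              · intro _; omega
              · intro _; exact hPmem
            · rw [Wfun_O i (by omega)]
              have hi21 : i.val = 2*n+1 := by have := i.isLt; omega
              constructor
              · intro hQmem
                exact (pq.disPQ p.1 hctr (VV_center pq.bndQ hQmem halive.le)).elim
              · intro hpar; omega
        · by_cases hQmem : p ∈ VV pq.Q R
          · -- the all-odds codeword
            refine Or.inr (Or.inr (Or.inl ?_))
            have hball := VV_alive pq.bndQ hQmem
            have hctr : p.1 ∈ pq.Q := VV_center pq.bndQ hQmem halive.le
            ext i
            rw [hp i]
            simp only [Finset.mem_filter, Finset.mem_univ, true_and]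
            by_cases h : i.val < 2*n
            · rw [Wfun_lt i h]
              constructor
              · intro hgad
                by_contra hpar
                have heven : i.val % 2 = 0 := by omega
                exact pq.disQU ⟨i.val, h⟩ heven p.1 hctr (gad_center hgad)
              · intro hpar
                exact ⟨halive, hball.trans (pq.subQ ⟨i.val, h⟩ hpar)⟩
            · by_cases h' : i.val = 2*n
              · rw [Wfun_E i h']
                constructor
                · intro hPm
                  exact (pq.disPQ p.1 (VV_center pq.bndP hPm halive.le) hctr).elim
                · intro hpar; omega
              · rw [Wfun_O i (by omega)]
                have hi21 : i.val = 2*n+1 := by have := i.isLt; omega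
                constructor
                · intro _; omega
                · intro _; exact hQmem
          · -- no new set: the codeword comes from the old tents
            have hpatt : patt U p.1 ∈ Tcode n := hcode ▸ patt_mem_code U p.1
            have h2e : ∀ a b : Fin (2*n), a ≠ b → a.val % 2 = 0 → b.val % 2 = 0 →
                p ∈ gad (U a) → p ∈ gad (U b) → False := by
              intro a b hab ha hb hpa hpb
              exact hPmem (gad_subset_VV
                ⟨halive, pq.coverP p.1 (p.2+1) a b hab ha hb hpa.2 hpb.2⟩)
            have h2o : ∀ a b : Fin (2*n), a ≠ b → a.val % 2 = 1 → b.val % 2 = 1 →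
                p ∈ gad (U a) → p ∈ gad (U b) → False := by
              intro a b hab ha hb hpa hpb
              exact hQmem (gad_subset_VV
                ⟨halive, pq.coverQ p.1 (p.2+1) a b hab ha hb hpa.2 hpb.2⟩)
            by_cases hex : ∃ a : Fin (2*n), a.val % 2 = 0 ∧ p ∈ gad (U a)
            · obtain ⟨a, ha2, hpa⟩ := hex
              by_cases hox : ∃ b : Fin (2*n), b.val % 2 = 1 ∧ p ∈ gad (U b)
              · obtain ⟨b, hb2, hpb⟩ := hox
                have hEO := Tcode_even_odd hpatt ha2 hb2
                  ((mem_patt U p.1 a).2 (gad_center hpa))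
                  ((mem_patt U p.1 b).2 (gad_center hpb))
                have han : a.val / 2 < n + 1 := by have := a.isLt; omega
                refine Or.inl ⟨⟨a.val / 2, han⟩, ?_⟩
                have ha2' : 2 * (a.val / 2) = a.val := by omega
                ext i
                rw [hp i]
                simp only [Finset.mem_insert, Finset.mem_singleton, Fin.ext_iff]
                by_cases h : i.val < 2*n
                · rw [Wfun_lt i h]
                  constructor
                  · intro hgad
                    by_cases hja : i.val = a.val
                    · left; omega
                    · by_cases hjb : i.val = b.val
                      · right; omega
                      · exfalso
                        have hja' : (⟨i.val, h⟩ : Fin (2*n)) ≠ a :=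
                          fun he => hja (show i.val = a.val from congrArg Fin.val he)
                        have hjb' : (⟨i.val, h⟩ : Fin (2*n)) ≠ b :=
                          fun he => hjb (show i.val = b.val from congrArg Fin.val he)
                        exact hEO.2 ⟨i.val, h⟩ hja' hjb'
                          ((mem_patt U p.1 _).2 (gad_center hgad))
                  · intro hval
                    rcases hval with hval | hval
                    · have hv : i.val = a.val := by omega
                      have he : (⟨i.val, h⟩ : Fin (2*n)) = a := Fin.ext hv
                      rw [he]; exact hpa
                    · have hv : i.val = b.val := by omega
                      have he : (⟨i.val, h⟩ : Fin (2*n)) = b := Fin.ext hv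
                      rw [he]; exact hpb
                · by_cases h' : i.val = 2*n
                  · rw [Wfun_E i h']
                    constructor
                    · intro hPm; exact (hPmem hPm).elim
                    · intro hval; exfalso; have := a.isLt; omega
                  · rw [Wfun_O i (by omega)]
                    have hi21 : i.val = 2*n+1 := by have := i.isLt; omega
                    constructor
                    · intro hQm; exact (hQmem hQm).elim
                    · intro hval; exfalso; have := a.isLt; omega
              · -- only the even tent a
                refine Or.inr (Or.inr (Or.inr (Or.inl ⟨⟨a.val, by omega⟩, ?_⟩)))
                ext i
                rw [hp i]
                simp only [Finset.mem_singleton, Fin.ext_iff]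
                by_cases h : i.val < 2*n
                · rw [Wfun_lt i h]
                  constructor
                  · intro hgad
                    by_cases hpar : i.val % 2 = 0
                    · by_cases hja : i.val = a.val
                      · omega
                      · exfalso
                        refine h2e ⟨i.val, h⟩ a
                          (fun he => hja (show i.val = a.val from congrArg Fin.val he))
                          hpar ha2 hgad hpa
                    · have hp1 : i.val % 2 = 1 := by omega
                      exact (hox ⟨⟨i.val, h⟩, hp1, hgad⟩).elim
                  · intro hval
                    have hv : i.val = a.val := by omega
                    have he : (⟨i.val, h⟩ : Fin (2*n)) = a := Fin.ext hv
                    rw [he]; exact hpa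
                · by_cases h' : i.val = 2*n
                  · rw [Wfun_E i h']
                    constructor
                    · intro hPm; exact (hPmem hPm).elim
                    · intro hval; exfalso; have := a.isLt; omega
                  · rw [Wfun_O i (by omega)]
                    have hi21 : i.val = 2*n+1 := by have := i.isLt; omega
                    constructor
                    · intro hQm; exact (hQmem hQm).elim
                    · intro hval; exfalso; have := a.isLt; omega
            · by_cases hox : ∃ b : Fin (2*n), b.val % 2 = 1 ∧ p ∈ gad (U b)
              · -- only an odd tent b
                obtain ⟨b, hb2, hpb⟩ := hox
                refine Or.inr (Or.inr (Or.inr (Or.inl ⟨⟨b.val, by omega⟩, ?_⟩)))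
                ext i
                rw [hp i]
                simp only [Finset.mem_singleton, Fin.ext_iff]
                by_cases h : i.val < 2*n
                · rw [Wfun_lt i h]
                  constructor
                  · intro hgad
                    by_cases hpar : i.val % 2 = 1
                    · by_cases hjb : i.val = b.val
                      · omega
                      · exfalso
                        refine h2o ⟨i.val, h⟩ b
                          (fun he => hjb (show i.val = b.val from congrArg Fin.val he))
                          hpar hb2 hgad hpb
                    · have hp0 : i.val % 2 = 0 := by omega
                      exact (hex ⟨⟨i.val, h⟩, hp0, hgad⟩).elim
                  · intro hval
                    have hv : i.val = b.val := by omega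
                    have he : (⟨i.val, h⟩ : Fin (2*n)) = b := Fin.ext hv
                    rw [he]; exact hpb
                · by_cases h' : i.val = 2*n
                  · rw [Wfun_E i h']
                    constructor
                    · intro hPm; exact (hPmem hPm).elim
                    · intro hval; exfalso; have := b.isLt; omega
                  · rw [Wfun_O i (by omega)]
                    have hi21 : i.val = 2*n+1 := by have := i.isLt; omega
                    constructor
                    · intro hQm; exact (hQmem hQm).elim
                    · intro hval; exfalso; have := b.isLt; omega
              · -- empty codeword
                refine Or.inr (Or.inr (Or.inr (Or.inr ?_)))
                ext i
                rw [hp i]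
                simp only [Finset.notMem_empty, iff_false]
                intro hmem
                by_cases h : i.val < 2*n
                · rw [Wfun_lt i h] at hmem
                  by_cases hpar : i.val % 2 = 0
                  · exact hex ⟨⟨i.val, h⟩, hpar, hmem⟩
                  · have hp1 : i.val % 2 = 1 := by omega
                    exact hox ⟨⟨i.val, h⟩, hp1, hmem⟩
                · by_cases h' : i.val = 2*n
                  · rw [Wfun_E i h'] at hmem; exact hPmem hmem
                  · rw [Wfun_O i (by omega)] at hmem; exact hQmem hmem
      · -- dead zone : only the two new sets are possible
        have htent : ∀ (i : Fin (2*(n+1))) (h : i.val < 2*n),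
            p ∉ Wfun n U pq.P pq.Q R i := by
          intro i h hmem
          rw [Wfun_lt i h] at hmem
          exact halive hmem.1
        by_cases hPmem : p ∈ VV pq.P R
        · by_cases hQmem : p ∈ VV pq.Q R
          · refine Or.inl ⟨⟨n, by omega⟩, ?_⟩
            ext i
            rw [hp i]
            simp only [Finset.mem_insert, Finset.mem_singleton, Fin.ext_iff]
            by_cases h : i.val < 2*n
            · constructor
              · intro hmem; exact (htent i h hmem).elim
              · intro hval; exfalso; omega
            · by_cases h' : i.val = 2*n
              · rw [Wfun_E i h']
                constructor
                · intro _; left; omega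
                · intro _; exact hPmem
              · rw [Wfun_O i (by omega)]
                have hi21 : i.val = 2*n+1 := by have := i.isLt; omega
                constructor
                · intro _; right; omega
                · intro _; exact hQmem
          · refine Or.inr (Or.inr (Or.inr (Or.inl ⟨⟨2*n, by omega⟩, ?_⟩)))
            ext i
            rw [hp i]
            simp only [Finset.mem_singleton, Fin.ext_iff]
            by_cases h : i.val < 2*n
            · constructor
              · intro hmem; exact (htent i h hmem).elim
              · intro hval; exfalso; omega
            · by_cases h' : i.val = 2*n
              · rw [Wfun_E i h']
                constructor
                · intro _; omega
                · intro _; exact hPmem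
              · rw [Wfun_O i (by omega)]
                have hi21 : i.val = 2*n+1 := by have := i.isLt; omega
                constructor
                · intro hQm; exact (hQmem hQm).elim
                · intro hval; exfalso; omega
        · by_cases hQmem : p ∈ VV pq.Q R
          · refine Or.inr (Or.inr (Or.inr (Or.inl ⟨⟨2*n+1, by omega⟩, ?_⟩)))
            ext i
            rw [hp i]
            simp only [Finset.mem_singleton, Fin.ext_iff]
            by_cases h : i.val < 2*n
            · constructor
              · intro hmem; exact (htent i h hmem).elim
              · intro hval; exfalso; omega
            · by_cases h' : i.val = 2*n
              · rw [Wfun_E i h']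
                constructor
                · intro hPm; exact (hPmem hPm).elim
                · intro hval; exfalso; omega
              · rw [Wfun_O i (by omega)]
                have hi21 : i.val = 2*n+1 := by have := i.isLt; omega
                constructor
                · intro _; omega
                · intro _; exact hQmem
          · refine Or.inr (Or.inr (Or.inr (Or.inr ?_)))
            ext i
            rw [hp i]
            simp only [Finset.notMem_empty, iff_false]
            intro hmem
            by_cases h : i.val < 2*n
            · exact htent i h hmem
            · by_cases h' : i.val = 2*n
              · rw [Wfun_E i h'] at hmem; exact hPmem hmem
              · rw [Wfun_O i (by omega)] at hmem; exact hQmem hmem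
    · intro hσ
      rcases hσ with ⟨k, hk⟩ | he | ho | ⟨j, hj⟩ | h0
      · by_cases hkn : k.val < n
        · -- an old pair
          obtain ⟨x, hxpat, hxP, hxQ⟩ := pq.pairW ⟨k.val, hkn⟩
          have hxa : x ∈ U ⟨2*k.val, by omega⟩ := (hxpat _).2 (Or.inl rfl)
          have hxb : x ∈ U ⟨2*k.val+1, by omega⟩ := (hxpat _).2 (Or.inr rfl)
          obtain ⟨ε, hε, hsub⟩ := exists_closedBall_subset
            ((hUo ⟨2*k.val, by omega⟩).inter (hUo ⟨2*k.val+1, by omega⟩)) (mem_inter hxa hxb)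
          subst hk
          refine ⟨(x, -1+ε), fun i => ?_⟩
          simp only [Finset.mem_insert, Finset.mem_singleton, Fin.ext_iff]
          by_cases h : i.val < 2*n
          · rw [Wfun_lt i h]
            constructor
            · intro hval
              refine ⟨by show (-1:ℝ) < -1 + ε; linarith, ?_⟩
              show closedBall x ((-1+ε)+1) ⊆ _
              rw [show (-1+ε)+1 = ε by ring]
              rcases hval with hval | hval
              · have hv : i.val = 2*k.val := by omega
                have heq : (⟨i.val, h⟩ : Fin (2*n)) = ⟨2*k.val, by omega⟩ := Fin.ext hv
                rw [heq]
                exact hsub.trans inter_subset_left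
              · have hv : i.val = 2*k.val+1 := by omega
                have heq : (⟨i.val, h⟩ : Fin (2*n)) = ⟨2*k.val+1, by omega⟩ := Fin.ext hv
                rw [heq]
                exact hsub.trans inter_subset_right
            · intro hgad
              have hmem := (hxpat ⟨i.val, h⟩).1 (gad_center hgad)
              have hmem' : i.val = 2*k.val ∨ i.val = 2*k.val+1 := hmem
              omega
          · by_cases h' : i.val = 2*n
            · rw [Wfun_E i h']
              constructor
              · intro hval; exfalso; omega
              · intro hPm
                have : ((x, -1+ε) : Euc d × ℝ).1 ∈ pq.P :=
                  VV_center pq.bndP hPm (by show (-1:ℝ) ≤ -1+ε; linarith)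
                exact (hxP this).elim
            · rw [Wfun_O i (by omega)]
              have hi21 : i.val = 2*n+1 := by have := i.isLt; omega
              constructor
              · intro hval; exfalso; omega
              · intro hQm
                have : ((x, -1+ε) : Euc d × ℝ).1 ∈ pq.Q :=
                  VV_center pq.bndQ hQm (by show (-1:ℝ) ≤ -1+ε; linarith)
                exact (hxQ this).elim
        · -- the new pair {2n, 2n+1}
          have hkn' : k.val = n := by have := k.isLt; omega
          subst hk
          refine ⟨((0 : Euc d), -(R+3)-1/2), fun i => ?_⟩
          have hbb : ((0 : Euc d), -(R+3)-1/2) ∈ blob d R := blob_nonempty R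
          simp only [Finset.mem_insert, Finset.mem_singleton, Fin.ext_iff]
          by_cases h : i.val < 2*n
          · rw [Wfun_lt i h]
            constructor
            · intro hval; exfalso; omega
            · intro hgad
              have h1 : (-1:ℝ) < -(R+3)-1/2 := hgad.1
              exfalso; linarith
          · by_cases h' : i.val = 2*n
            · rw [Wfun_E i h']
              constructor
              · intro _; exact blob_subset_VV ⟨_, hgadPne⟩ hbb
              · intro _; left; omega
            · rw [Wfun_O i (by omega)]
              have hi21 : i.val = 2*n+1 := by have := i.isLt; omega
              constructor
              · intro _; exact blob_subset_VV ⟨_, hgadQne⟩ hbb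
              · intro _; right; omega
      · -- all evens
        subst he
        refine ⟨(c, -1+ρ), fun i => ?_⟩
        simp only [Finset.mem_filter, Finset.mem_univ, true_and]
        by_cases h : i.val < 2*n
        · rw [Wfun_lt i h]
          constructor
          · intro hpar
            refine ⟨by show (-1:ℝ) < -1 + ρ; linarith, ?_⟩
            show closedBall c ((-1+ρ)+1) ⊆ _
            rw [show (-1+ρ)+1 = ρ by ring]
            exact hcballP.trans (pq.subP ⟨i.val, h⟩ hpar)
          · intro hgad
            by_contra hpar
            have hodd : i.val % 2 = 1 := by omega
            exact pq.disPU ⟨i.val, h⟩ hodd c hcP (gad_center hgad)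
        · by_cases h' : i.val = 2*n
          · rw [Wfun_E i h']
            constructor
            · intro _; exact gad_subset_VV hgadPne
            · intro _; omega
          · rw [Wfun_O i (by omega)]
            have hi21 : i.val = 2*n+1 := by have := i.isLt; omega
            constructor
            · intro hpar; exfalso; omega
            · intro hQm
              have : ((c, -1+ρ) : Euc d × ℝ).1 ∈ pq.Q :=
                VV_center pq.bndQ hQm (by show (-1:ℝ) ≤ -1+ρ; linarith)
              exact (pq.disPQ c hcP this).elim
      · -- all odds
        subst ho
        refine ⟨(c', -1+ρ'), fun i => ?_⟩
        simp only [Finset.mem_filter, Finset.mem_univ, true_and]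
        by_cases h : i.val < 2*n
        · rw [Wfun_lt i h]
          constructor
          · intro hpar
            refine ⟨by show (-1:ℝ) < -1 + ρ'; linarith, ?_⟩
            show closedBall c' ((-1+ρ')+1) ⊆ _
            rw [show (-1+ρ')+1 = ρ' by ring]
            exact hcballQ.trans (pq.subQ ⟨i.val, h⟩ hpar)
          · intro hgad
            by_contra hpar
            have heven : i.val % 2 = 0 := by omega
            exact pq.disQU ⟨i.val, h⟩ heven c' hcQ (gad_center hgad)
        · by_cases h' : i.val = 2*n
          · rw [Wfun_E i h']
            constructor
            · intro hpar; exfalso; omega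
            · intro hPm
              have : ((c', -1+ρ') : Euc d × ℝ).1 ∈ pq.P :=
                VV_center pq.bndP hPm (by show (-1:ℝ) ≤ -1+ρ'; linarith)
              exact (pq.disPQ c' this hcQ).elim
          · rw [Wfun_O i (by omega)]
            have hi21 : i.val = 2*n+1 := by have := i.isLt; omega
            constructor
            · intro _; exact gad_subset_VV hgadQne
            · intro _; omega
      · -- singletons
        by_cases hjn : j.val < 2*n
        · obtain ⟨x, hxpat, hxP, hxQ⟩ := pq.singW ⟨j.val, hjn⟩
          have hxj : x ∈ U ⟨j.val, hjn⟩ := (hxpat _).2 rfl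
          obtain ⟨ε, hε, hsub⟩ := exists_closedBall_subset (hUo ⟨j.val, hjn⟩) hxj
          subst hj
          refine ⟨(x, -1+ε), fun i => ?_⟩
          simp only [Finset.mem_singleton, Fin.ext_iff]
          by_cases h : i.val < 2*n
          · rw [Wfun_lt i h]
            constructor
            · intro hval
              refine ⟨by show (-1:ℝ) < -1 + ε; linarith, ?_⟩
              show closedBall x ((-1+ε)+1) ⊆ _
              rw [show (-1+ε)+1 = ε by ring]
              have heq : (⟨i.val, h⟩ : Fin (2*n)) = ⟨j.val, hjn⟩ := Fin.ext hval
              rw [heq]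
              exact hsub
            · intro hgad
              have hmem := (hxpat ⟨i.val, h⟩).1 (gad_center hgad)
              have hval2 : (⟨i.val, h⟩ : Fin (2*n)).val = (⟨j.val, hjn⟩ : Fin (2*n)).val :=
                congrArg Fin.val hmem
              exact hval2
          · by_cases h' : i.val = 2*n
            · rw [Wfun_E i h']
              constructor
              · intro hval; exfalso; omega
              · intro hPm
                have : ((x, -1+ε) : Euc d × ℝ).1 ∈ pq.P :=
                  VV_center pq.bndP hPm (by show (-1:ℝ) ≤ -1+ε; linarith)
                exact (hxP this).elim
            · rw [Wfun_O i (by omega)]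
              have hi21 : i.val = 2*n+1 := by have := i.isLt; omega
              constructor
              · intro hval; exfalso; omega
              · intro hQm
                have : ((x, -1+ε) : Euc d × ℝ).1 ∈ pq.Q :=
                  VV_center pq.bndQ hQm (by show (-1:ℝ) ≤ -1+ε; linarith)
                exact (hxQ this).elim
        · -- the singletons {2n} and {2n+1}
          have hjcase : j.val = 2*n ∨ j.val = 2*n+1 := by have := j.isLt; omega
          rcases hjcase with hj2 | hj2
          · -- singleton {2n} : a point of V_P at height exactly -1
            have hD0 : (0:ℝ) < ρ + (R + 5/2) := by linarith
            have hDne : ρ + (R + 5/2) ≠ 0 := hD0.ne'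
            set v : ℝ := ρ / (ρ + (R + 5/2)) with hv
            have hv0 : 0 < v := div_pos hρ hD0
            have hv1 : v < 1 := by
              rw [hv, div_lt_one hD0]; linarith
            set u : ℝ := 1 - v with hu
            have hu0 : 0 ≤ u := by rw [hu]; linarith
            have huv : u + v = 1 := by rw [hu]; ring
            set bb : Euc d × ℝ := ((0 : Euc d), -(R+3)-1/2) with hbb
            set z : Euc d × ℝ := u • ((c, -1+ρ) : Euc d × ℝ) + v • bb with hz
            have hzmem : z ∈ VV pq.P R :=
              mem_convexJoin.2 ⟨_, hgadPne, bb, blob_nonempty R, u, v, hu0, hv0.le, huv, rfl⟩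
            have hz2 : z.2 = -1 := by
              have hz2' : z.2 = u*(-1+ρ) + v*(-(R+3)-1/2) := by
                rw [hz, hbb]; simp [Prod.add_def, Prod.smul_def, smul_eq_mul]
              rw [hz2', hu, hv]
              field_simp
              ring
            have hzP : z.1 ∈ pq.P := VV_center pq.bndP hzmem (le_of_eq hz2.symm)
            subst hj
            refine ⟨z, fun i => ?_⟩
            simp only [Finset.mem_singleton]
            by_cases h : i.val < 2*n
            · rw [Wfun_lt i h]
              constructor
              · intro hval
                exfalso
                have hiv : i.val = j.val := congrArg Fin.val hval
                omega
              · intro hgad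
                exfalso
                have h1 := hgad.1
                rw [hz2] at h1
                exact lt_irrefl _ h1
            · by_cases h' : i.val = 2*n
              · rw [Wfun_E i h']
                constructor
                · intro _; exact hzmem
                · intro _; exact Fin.ext (by omega)
              · rw [Wfun_O i (by omega)]
                have hi21 : i.val = 2*n+1 := by have := i.isLt; omega
                constructor
                · intro hval
                  exfalso
                  have hiv : i.val = j.val := congrArg Fin.val hval
                  omega
                · intro hQm
                  have hzQ : z.1 ∈ pq.Q := VV_center pq.bndQ hQm (le_of_eq hz2.symm)
                  exact (pq.disPQ z.1 hzP hzQ).elim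
          · -- singleton {2n+1} : a point of V_Q at height exactly -1
            have hD0 : (0:ℝ) < ρ' + (R + 5/2) := by linarith
            have hDne : ρ' + (R + 5/2) ≠ 0 := hD0.ne'
            set v : ℝ := ρ' / (ρ' + (R + 5/2)) with hv
            have hv0 : 0 < v := div_pos hρ' hD0
            have hv1 : v < 1 := by
              rw [hv, div_lt_one hD0]; linarith
            set u : ℝ := 1 - v with hu
            have hu0 : 0 ≤ u := by rw [hu]; linarith
            have huv : u + v = 1 := by rw [hu]; ring
            set bb : Euc d × ℝ := ((0 : Euc d), -(R+3)-1/2) with hbb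
            set z : Euc d × ℝ := u • ((c', -1+ρ') : Euc d × ℝ) + v • bb with hz
            have hzmem : z ∈ VV pq.Q R :=
              mem_convexJoin.2 ⟨_, hgadQne, bb, blob_nonempty R, u, v, hu0, hv0.le, huv, rfl⟩
            have hz2 : z.2 = -1 := by
              have hz2' : z.2 = u*(-1+ρ') + v*(-(R+3)-1/2) := by
                rw [hz, hbb]; simp [Prod.add_def, Prod.smul_def, smul_eq_mul]
              rw [hz2', hu, hv]
              field_simp
              ring
            have hzQ : z.1 ∈ pq.Q := VV_center pq.bndQ hzmem (le_of_eq hz2.symm)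
            subst hj
            refine ⟨z, fun i => ?_⟩
            simp only [Finset.mem_singleton]
            by_cases h : i.val < 2*n
            · rw [Wfun_lt i h]
              constructor
              · intro hval
                exfalso
                have hiv : i.val = j.val := congrArg Fin.val hval
                omega
              · intro hgad
                exfalso
                have h1 := hgad.1
                rw [hz2] at h1
                exact lt_irrefl _ h1
            · by_cases h' : i.val = 2*n
              · rw [Wfun_E i h']
                constructor
                · intro hval
                  exfalso
                  have hiv : i.val = j.val := congrArg Fin.val hval
                  omega
                · intro hPm
                  have hzP : z.1 ∈ pq.P := VV_center pq.bndP hPm (le_of_eq hz2.symm)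
                  exact (pq.disPQ z.1 hzP hzQ).elim
              · rw [Wfun_O i (by omega)]
                have hi21 : i.val = 2*n+1 := by have := i.isLt; omega
                constructor
                · intro _; exact hzmem
                · intro _; exact Fin.ext (by omega)
      · -- the empty codeword
        subst h0
        refine ⟨((0 : Euc d), -(R+5)), fun i => ?_⟩
        simp only [Finset.notMem_empty, false_iff]
        intro hmem
        by_cases h : i.val < 2*n
        · rw [Wfun_lt i h] at hmem
          have h1 : (-1:ℝ) < -(R+5) := hmem.1
          linarith
        · by_cases h' : i.val = 2*n
          · rw [Wfun_E i h'] at hmem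
            have := VV_tlb (by linarith) hmem
            have h2 : -(R+4) < ((0 : Euc d), -(R+5)).2 := this
            have h3 : (-(R+4) : ℝ) < -(R+5) := h2
            linarith
          · rw [Wfun_O i (by omega)] at hmem
            have := VV_tlb (by linarith) hmem
            have h3 : (-(R+4) : ℝ) < -(R+5) := this
            linarith


/-- Structure lemma: two distinct odd indices force the all-odds codeword. -/
lemma Tcode_two_odds {n : ℕ} {σ : Finset (Fin (2*n))} (hσ : σ ∈ Tcode n)
    {a b : Fin (2*n)} (hab : a ≠ b) (ha2 : a.val % 2 = 1) (hb2 : b.val % 2 = 1)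
    (ha : a ∈ σ) (hb : b ∈ σ) :
    (∀ c : Fin (2*n), c.val % 2 = 1 → c ∈ σ) ∧
    (∀ c : Fin (2*n), c.val % 2 = 0 → c ∉ σ) := by
  rcases hσ with ⟨k, hk⟩ | he | ho | ⟨j, hj⟩ | h0
  · subst hk
    simp only [Finset.mem_insert, Finset.mem_singleton, Fin.ext_iff] at ha hb
    exact absurd (Fin.ext (show a.val = b.val by omega)) hab
  · subst he
    simp only [Finset.mem_filter, Finset.mem_univ, true_and] at ha
    omega
  · subst ho
    constructor
    · intro c hc; simp [Finset.mem_filter, hc]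
    · intro c hc; simp [Finset.mem_filter]; omega
  · subst hj
    simp only [Finset.mem_singleton] at ha hb
    exact absurd (ha.trans hb.symm) hab
  · subst h0; simp at ha

/-- Construction of the `P`,`Q` data when `n ≥ 2`. -/
noncomputable def PQW_of_two_le {n d : ℕ} (hn : 2 ≤ n) (U : Fin (2*n) → Set (Euc d))
    (hUc : ∀ i, Convex ℝ (U i)) (hUo : ∀ i, IsOpen (U i)) (hcode : codeOf U = Tcode n)
    (R : ℝ) (hUb : ∀ i, U i ⊆ ball 0 R) : PQW n d U R := by
  have hpatt : ∀ x : Euc d, patt U x ∈ Tcode n := fun x => hcode ▸ patt_mem_code U x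
  have h02 : (2:ℕ) < 2*n := by omega
  have h03 : (3:ℕ) < 2*n := by omega
  have h00 : (0:ℕ) < 2*n := by omega
  have h01 : (1:ℕ) < 2*n := by omega
  refine
  { P := {x | ∀ i : Fin (2*n), i.val % 2 = 0 → x ∈ U i}
    Q := {x | ∀ i : Fin (2*n), i.val % 2 = 1 → x ∈ U i}
    convP := ?_
    openP := ?_
    convQ := ?_
    openQ := ?_
    bndP := ?_
    bndQ := ?_
    neP := ?_
    neQ := ?_
    subP := fun i hi x hx => hx i hi
    subQ := fun i hi x hx => hx i hi
    disPU := ?_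
    disQU := ?_
    disPQ := ?_
    coverP := ?_
    coverQ := ?_
    pairW := ?_
    singW := ?_
    emptyW := ?_ }
  · intro x hx y hy a b ha hb hab i hi
    exact hUc i (hx i hi) (hy i hi) ha hb hab
  · have hPeq : {x : Euc d | ∀ i : Fin (2*n), i.val % 2 = 0 → x ∈ U i}
        = ⋂ i : Fin (2*n), (if i.val % 2 = 0 then U i else univ) := by
      ext x
      simp only [mem_iInter, mem_setOf_eq]
      constructor
      · intro hx i
        by_cases h : i.val % 2 = 0
        · rw [if_pos h]; exact hx i h
        · rw [if_neg h]; trivial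
      · intro hx i h
        have := hx i
        rwa [if_pos h] at this
    rw [hPeq]
    exact isOpen_iInter_of_finite fun i => by
      by_cases h : i.val % 2 = 0
      · rw [if_pos h]; exact hUo i
      · rw [if_neg h]; exact isOpen_univ
  · intro x hx y hy a b ha hb hab i hi
    exact hUc i (hx i hi) (hy i hi) ha hb hab
  · have hQeq : {x : Euc d | ∀ i : Fin (2*n), i.val % 2 = 1 → x ∈ U i}
        = ⋂ i : Fin (2*n), (if i.val % 2 = 1 then U i else univ) := by
      ext x
      simp only [mem_iInter, mem_setOf_eq]
      constructor
      · intro hx i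
        by_cases h : i.val % 2 = 1
        · rw [if_pos h]; exact hx i h
        · rw [if_neg h]; trivial
      · intro hx i h
        have := hx i
        rwa [if_pos h] at this
    rw [hQeq]
    exact isOpen_iInter_of_finite fun i => by
      by_cases h : i.val % 2 = 1
      · rw [if_pos h]; exact hUo i
      · rw [if_neg h]; exact isOpen_univ
  · exact fun x hx => hUb ⟨0, h00⟩ (hx ⟨0, h00⟩ (by norm_num))
  · exact fun x hx => hUb ⟨1, h01⟩ (hx ⟨1, h01⟩ (by norm_num))
  · have : (Finset.univ.filter (fun i : Fin (2*n) => i.val % 2 = 0)) ∈ codeOf U := by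
      rw [hcode]; exact Or.inr (Or.inl rfl)
    obtain ⟨x, hx⟩ := this
    exact ⟨x, fun i hi => (hx i).1 (Finset.mem_filter.2 ⟨Finset.mem_univ i, hi⟩)⟩
  · have : (Finset.univ.filter (fun i : Fin (2*n) => i.val % 2 = 1)) ∈ codeOf U := by
      rw [hcode]; exact Or.inr (Or.inr (Or.inl rfl))
    obtain ⟨x, hx⟩ := this
    exact ⟨x, fun i hi => (hx i).1 (Finset.mem_filter.2 ⟨Finset.mem_univ i, hi⟩)⟩
  · -- disPU
    intro i hi x hxP hxU
    have hx0 : x ∈ U ⟨0, h00⟩ := hxP _ (by norm_num)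
    have hEO := Tcode_even_odd (hpatt x) (by norm_num) hi
      ((mem_patt U x _).2 hx0) ((mem_patt U x _).2 hxU)
    have hc2 : x ∈ U ⟨2, h02⟩ := hxP _ (by norm_num)
    refine hEO.2 ⟨2, h02⟩ ?_ ?_ ((mem_patt U x _).2 hc2)
    · intro he; exact absurd (show (2:ℕ) = 0 from congrArg Fin.val he) (by norm_num)
    · intro he
      have : (2:ℕ) = i.val := congrArg Fin.val he
      omega
  · -- disQU
    intro i hi x hxQ hxU
    have hx1 : x ∈ U ⟨1, h01⟩ := hxQ _ (by norm_num)
    have hEO := Tcode_even_odd (hpatt x) hi (by norm_num)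
      ((mem_patt U x _).2 hxU) ((mem_patt U x _).2 hx1)
    have hc3 : x ∈ U ⟨3, h03⟩ := hxQ _ (by norm_num)
    refine hEO.2 ⟨3, h03⟩ ?_ ?_ ((mem_patt U x _).2 hc3)
    · intro he
      have : (3:ℕ) = i.val := congrArg Fin.val he
      omega
    · intro he; exact absurd (show (3:ℕ) = 1 from congrArg Fin.val he) (by norm_num)
  · -- disPQ
    intro x hxP hxQ
    have hx0 : x ∈ U ⟨0, h00⟩ := hxP _ (by norm_num)
    have hx1 : x ∈ U ⟨1, h01⟩ := hxQ _ (by norm_num)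
    have hEO := Tcode_even_odd (hpatt x) (by norm_num) (by norm_num)
      ((mem_patt U x _).2 hx0) ((mem_patt U x _).2 hx1)
    have hc2 : x ∈ U ⟨2, h02⟩ := hxP _ (by norm_num)
    refine hEO.2 ⟨2, h02⟩ ?_ ?_ ((mem_patt U x _).2 hc2)
    · intro he; exact absurd (show (2:ℕ) = 0 from congrArg Fin.val he) (by norm_num)
    · intro he; exact absurd (show (2:ℕ) = 1 from congrArg Fin.val he) (by norm_num)
  · -- coverP
    intro x δ a b hab ha hb hsa hsb y hy i hi
    have h2 := Tcode_two_evens (hpatt y) hab ha hb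
      ((mem_patt U y a).2 (hsa hy)) ((mem_patt U y b).2 (hsb hy))
    exact (mem_patt U y i).1 (h2.1 i hi)
  · -- coverQ
    intro x δ a b hab ha hb hsa hsb y hy i hi
    have h2 := Tcode_two_odds (hpatt y) hab ha hb
      ((mem_patt U y a).2 (hsa hy)) ((mem_patt U y b).2 (hsb hy))
    exact (mem_patt U y i).1 (h2.1 i hi)
  · -- pairW
    intro k
    have hpair : ({⟨2*k.val, by omega⟩, ⟨2*k.val+1, by omega⟩} : Finset (Fin (2*n)))
        ∈ codeOf U := by
      rw [hcode]; exact Or.inl ⟨k, rfl⟩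
    obtain ⟨x, hx⟩ := hpair
    have hpat : ∀ i : Fin (2*n), x ∈ U i ↔ (i.val = 2*k.val ∨ i.val = 2*k.val+1) := by
      intro i
      rw [← hx i]
      simp only [Finset.mem_insert, Finset.mem_singleton, Fin.ext_iff]
    refine ⟨x, hpat, ?_, ?_⟩
    · intro hxP
      by_cases hk0 : k.val = 0
      · have hc : x ∈ U ⟨2, h02⟩ := hxP _ (by norm_num)
        have := (hpat ⟨2, h02⟩).1 hc
        have h2 : (2:ℕ) = 2*k.val ∨ (2:ℕ) = 2*k.val+1 := this
        omega
      · have hc : x ∈ U ⟨0, h00⟩ := hxP _ (by norm_num)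
        have := (hpat ⟨0, h00⟩).1 hc
        have h2 : (0:ℕ) = 2*k.val ∨ (0:ℕ) = 2*k.val+1 := this
        omega
    · intro hxQ
      by_cases hk0 : k.val = 0
      · have hc : x ∈ U ⟨3, h03⟩ := hxQ _ (by norm_num)
        have := (hpat ⟨3, h03⟩).1 hc
        have h2 : (3:ℕ) = 2*k.val ∨ (3:ℕ) = 2*k.val+1 := this
        omega
      · have hc : x ∈ U ⟨1, h01⟩ := hxQ _ (by norm_num)
        have := (hpat ⟨1, h01⟩).1 hc
        have h2 : (1:ℕ) = 2*k.val ∨ (1:ℕ) = 2*k.val+1 := this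
        omega
  · -- singW
    intro j
    have hsing : ({j} : Finset (Fin (2*n))) ∈ codeOf U := by
      rw [hcode]; exact Or.inr (Or.inr (Or.inr (Or.inl ⟨j, rfl⟩)))
    obtain ⟨x, hx⟩ := hsing
    have hpat : ∀ i : Fin (2*n), x ∈ U i ↔ i = j := by
      intro i
      rw [← hx i]
      simp only [Finset.mem_singleton]
    refine ⟨x, hpat, ?_, ?_⟩
    · intro hxP
      have hc0 : x ∈ U ⟨0, h00⟩ := hxP _ (by norm_num)
      have hc2 : x ∈ U ⟨2, h02⟩ := hxP _ (by norm_num)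
      have he0 := (hpat _).1 hc0
      have he2 := (hpat _).1 hc2
      have : (0:ℕ) = 2 := by
        have e0 : (0:ℕ) = j.val := congrArg Fin.val he0
        have e2 : (2:ℕ) = j.val := congrArg Fin.val he2
        omega
      norm_num at this
    · intro hxQ
      have hc1 : x ∈ U ⟨1, h01⟩ := hxQ _ (by norm_num)
      have hc3 : x ∈ U ⟨3, h03⟩ := hxQ _ (by norm_num)
      have he1 := (hpat _).1 hc1
      have he3 := (hpat _).1 hc3
      have : (1:ℕ) = 3 := by
        have e1 : (1:ℕ) = j.val := congrArg Fin.val he1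
        have e3 : (3:ℕ) = j.val := congrArg Fin.val he3
        omega
      norm_num at this
  · -- emptyW
    have hempty : (∅ : Finset (Fin (2*n))) ∈ codeOf U := by
      rw [hcode]; exact Or.inr (Or.inr (Or.inr (Or.inr rfl)))
    obtain ⟨x, hx⟩ := hempty
    exact ⟨x, fun i hi => by simpa using (hx i).2 hi⟩

/-- If an open set `A` meets the complement of an open convex set `B` (while `B` is
inhabited), then `A` even meets the complement of the closure of `B`. -/
lemma sep_aux {d : ℕ} {A B : Set (Euc d)} (hA : IsOpen A) (hBc : Convex ℝ B) (hBo : IsOpen B)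
    {x₀ : Euc d} (hx0A : x₀ ∈ A) (hx0B : x₀ ∉ B) {y : Euc d} (hy : y ∈ B) :
    ∃ xs, xs ∈ A ∧ xs ∉ closure B := by
  by_contra hcon
  push_neg at hcon
  obtain ⟨ε, hε, hball⟩ := Metric.isOpen_iff.1 hA x₀ hx0A
  set t : ℝ := ε / (2*(‖x₀ - y‖ + 1)) with ht
  have hden : 0 < ‖x₀ - y‖ + 1 := by positivity
  have ht0 : 0 < t := by rw [ht]; positivity
  set zz : Euc d := x₀ + t • (x₀ - y) with hzz
  have hzznear : ‖zz - x₀‖ < ε := by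
    rw [hzz, add_sub_cancel_left, norm_smul, Real.norm_eq_abs, abs_of_pos ht0, ht]
    rw [div_mul_eq_mul_div, div_lt_iff₀ (by positivity)]
    nlinarith [norm_nonneg (x₀ - y)]
  have hzzA : zz ∈ A := hball (by rwa [mem_ball, dist_eq_norm])
  have hzzB : zz ∈ closure B := hcon zz hzzA
  have h1t : (0:ℝ) < 1 + t := by linarith
  have ha0 : 0 < t/(1+t) := by positivity
  have hb0 : (0:ℝ) ≤ 1/(1+t) := by positivity
  have hab : t/(1+t) + 1/(1+t) = 1 := by field_simp <;> ring
  have hyint : y ∈ interior B := by rwa [hBo.interior_eq]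
  have hcombo := hBc.combo_interior_closure_mem_interior hyint hzzB ha0 hb0 hab
  have he : (t/(1+t)) • y + (1/(1+t)) • zz = x₀ := by
    rw [hzz, smul_add, smul_smul, smul_sub]
    have c1 : (1/(1+t))*t = t/(1+t) := by ring
    rw [c1]
    have c2 : (1/(1+t)) + t/(1+t) = 1 := by field_simp <;> ring
    calc (t/(1+t)) • y + ((1/(1+t)) • x₀ + ((t/(1+t)) • x₀ - (t/(1+t)) • y))
        = ((1/(1+t)) + t/(1+t)) • x₀ := by rw [add_smul]; abel
    _ = x₀ := by rw [c2, one_smul]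
  rw [he, hBo.interior_eq] at hcombo
  exact hx0B hcombo

/-- Construction of the `P`,`Q` data when `n = 1` and `d ≥ 1`. -/
lemma PQW_of_one {d : ℕ} (hd : 0 < d) (U : Fin (2*1) → Set (Euc d))
    (hUc : ∀ i, Convex ℝ (U i)) (hUo : ∀ i, IsOpen (U i)) (hcode : codeOf U = Tcode 1)
    (R : ℝ) (hUb : ∀ i, U i ⊆ ball 0 R) : Nonempty (PQW 1 d U R) := by
  have h00 : (0:ℕ) < 2*1 := by omega
  have h01 : (1:ℕ) < 2*1 := by omega
  -- pair witness
  have hpairset : ({⟨2*(⟨0, by omega⟩ : Fin 1).val, by omega⟩,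
      ⟨2*(⟨0, by omega⟩ : Fin 1).val+1, by omega⟩} : Finset (Fin (2*1))) ∈ codeOf U := by
    rw [hcode]; exact Or.inl ⟨⟨0, by omega⟩, rfl⟩
  obtain ⟨xp, hxp⟩ := hpairset
  have hxpat : ∀ i : Fin (2*1), xp ∈ U i ↔
      (i.val = 2*(⟨0, by omega⟩ : Fin 1).val ∨ i.val = 2*(⟨0, by omega⟩ : Fin 1).val+1) := by
    intro i
    rw [← hxp i]
    simp only [Finset.mem_insert, Finset.mem_singleton, Fin.ext_iff]
  have hxp0 : xp ∈ U ⟨0, h00⟩ := (hxpat _).2 (Or.inl rfl)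
  have hxp1 : xp ∈ U ⟨1, h01⟩ := (hxpat _).2 (Or.inr rfl)
  -- singleton witnesses
  have hsw : ∀ j : Fin (2*1), ∃ x, ∀ i, x ∈ U i ↔ i = j := by
    intro j
    have : ({j} : Finset (Fin (2*1))) ∈ codeOf U := by
      rw [hcode]; exact Or.inr (Or.inr (Or.inr (Or.inl ⟨j, rfl⟩)))
    obtain ⟨x, hx⟩ := this
    exact ⟨x, fun i => by rw [← hx i]; simp only [Finset.mem_singleton]⟩
  obtain ⟨x₀, hx₀⟩ := hsw ⟨0, h00⟩
  obtain ⟨y₀, hy₀⟩ := hsw ⟨1, h01⟩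
  have hx00 : x₀ ∈ U ⟨0, h00⟩ := (hx₀ _).2 rfl
  have hx01 : x₀ ∉ U ⟨1, h01⟩ := fun h => by
    have := (hx₀ _).1 h
    exact absurd (show (1:ℕ) = 0 from congrArg Fin.val this) (by norm_num)
  have hy01 : y₀ ∈ U ⟨1, h01⟩ := (hy₀ _).2 rfl
  have hy00 : y₀ ∉ U ⟨0, h00⟩ := fun h => by
    have := (hy₀ _).1 h
    exact absurd (show (0:ℕ) = 1 from congrArg Fin.val this) (by norm_num)
  obtain ⟨xs, hxsA, hxsB⟩ := sep_aux (hUo ⟨0, h00⟩) (hUc ⟨1, h01⟩) (hUo ⟨1, h01⟩)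
    hx00 hx01 hxp1
  obtain ⟨ys, hysA, hysB⟩ := sep_aux (hUo ⟨1, h01⟩) (hUc ⟨0, h00⟩) (hUo ⟨0, h00⟩)
    hy01 hy00 hxp0
  obtain ⟨ε1, hε1, hb1⟩ := Metric.isOpen_iff.1 isClosed_closure.isOpen_compl xs hxsB
  obtain ⟨ε2, hε2, hb2⟩ := Metric.isOpen_iff.1 (hUo ⟨0, h00⟩) xs hxsA
  obtain ⟨ε1', hε1', hb1'⟩ := Metric.isOpen_iff.1 isClosed_closure.isOpen_compl ys hysB
  obtain ⟨ε2', hε2', hb2'⟩ := Metric.isOpen_iff.1 (hUo ⟨1, h01⟩) ys hysA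
  set ρP : ℝ := min ε1 ε2 / 4 with hρP
  set ρQ : ℝ := min ε1' ε2' / 4 with hρQ
  have hρP0 : 0 < ρP := by rw [hρP]; have := lt_min hε1 hε2; positivity
  have hρQ0 : 0 < ρQ := by rw [hρQ]; have := lt_min hε1' hε2'; positivity
  have hρPε1 : ρP ≤ ε1/4 := by rw [hρP]; have := min_le_left ε1 ε2; linarith
  have hρPε2 : ρP ≤ ε2/4 := by rw [hρP]; have := min_le_right ε1 ε2; linarith
  have hρQε1 : ρQ ≤ ε1'/4 := by rw [hρQ]; have := min_le_left ε1' ε2'; linarith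
  have hρQε2 : ρQ ≤ ε2'/4 := by rw [hρQ]; have := min_le_right ε1' ε2'; linarith
  -- the key inclusion facts
  have hPsub0 : ball xs (3*ρP) ⊆ U ⟨0, h00⟩ :=
    (ball_subset_ball (by linarith)).trans hb2
  have hPdis1 : ∀ x ∈ ball xs (3*ρP), x ∉ U ⟨1, h01⟩ := by
    intro x hx hxu
    have : x ∈ (closure (U ⟨1, h01⟩))ᶜ := hb1 (ball_subset_ball (by linarith) hx)
    exact this (subset_closure hxu)
  have hQsub1 : ball ys (3*ρQ) ⊆ U ⟨1, h01⟩ :=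
    (ball_subset_ball (by linarith)).trans hb2'
  have hQdis0 : ∀ x ∈ ball ys (3*ρQ), x ∉ U ⟨0, h00⟩ := by
    intro x hx hxu
    have : x ∈ (closure (U ⟨0, h00⟩))ᶜ := hb1' (ball_subset_ball (by linarith) hx)
    exact this (subset_closure hxu)
  -- unit vector
  set e : Euc d := EuclideanSpace.single (⟨0, hd⟩ : Fin d) (1:ℝ) with he
  have hnorme : ‖e‖ = 1 := by rw [he, EuclideanSpace.norm_single]; norm_num
  have hfin : ∀ i : Fin (2*1), i = ⟨0, h00⟩ ∨ i = ⟨1, h01⟩ := by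
    intro i
    have := i.isLt
    rcases (show i.val = 0 ∨ i.val = 1 by omega) with h | h
    · exact Or.inl (Fin.ext h)
    · exact Or.inr (Fin.ext h)
  refine Nonempty.intro ?_
  refine
  { P := ball xs ρP
    Q := ball ys ρQ
    convP := convex_ball _ _
    openP := isOpen_ball
    convQ := convex_ball _ _
    openQ := isOpen_ball
    bndP := ?_
    bndQ := ?_
    neP := ⟨xs, mem_ball_self hρP0⟩
    neQ := ⟨ys, mem_ball_self hρQ0⟩
    subP := ?_
    subQ := ?_
    disPU := ?_
    disQU := ?_
    disPQ := ?_
    coverP := ?_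
    coverQ := ?_
    pairW := ?_
    singW := ?_
    emptyW := ?_ }
  · exact (ball_subset_ball (by linarith)).trans (hPsub0.trans (hUb _))
  · exact (ball_subset_ball (by linarith)).trans (hQsub1.trans (hUb _))
  · intro i hi
    have hiv : i = ⟨0, h00⟩ := by
      rcases hfin i with h | h
      · exact h
      · exfalso; rw [h] at hi; simp at hi
    rw [hiv]
    exact (ball_subset_ball (by linarith)).trans hb2
  · intro i hi
    have hiv : i = ⟨1, h01⟩ := by
      rcases hfin i with h | h
      · exfalso; rw [h] at hi; simp at hi
      · exact h
    rw [hiv]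
    exact (ball_subset_ball (by linarith)).trans hb2'
  · intro i hi x hxP hxU
    have hiv : i = ⟨1, h01⟩ := by
      rcases hfin i with h | h
      · exfalso; rw [h] at hi; simp at hi
      · exact h
    rw [hiv] at hxU
    exact hPdis1 x (ball_subset_ball (by linarith) hxP) hxU
  · intro i hi x hxQ hxU
    have hiv : i = ⟨0, h00⟩ := by
      rcases hfin i with h | h
      · exact h
      · exfalso; rw [h] at hi; simp at hi
    rw [hiv] at hxU
    exact hQdis0 x (ball_subset_ball (by linarith) hxQ) hxU
  · intro x hxP hxQ
    exact hPdis1 x (ball_subset_ball (by linarith) hxP)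
      (hQsub1 (ball_subset_ball (by linarith) hxQ))
  · intro x δ a b hab ha hb _ _
    exact absurd (Fin.ext (show a.val = b.val by
      have := a.isLt; have := b.isLt; omega)) hab
  · intro x δ a b hab ha hb _ _
    exact absurd (Fin.ext (show a.val = b.val by
      have := a.isLt; have := b.isLt; omega)) hab
  · -- pairW
    intro k
    refine ⟨xp, ?_, ?_, ?_⟩
    · intro i
      constructor
      · intro _
        have := i.isLt
        have hk := k.isLt
        omega
      · intro _
        rcases hfin i with h | h
        · rw [h]; exact hxp0
        · rw [h]; exact hxp1
    · intro hxpP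
      exact hPdis1 xp (ball_subset_ball (by linarith) hxpP) hxp1
    · intro hxpQ
      exact hQdis0 xp (ball_subset_ball (by linarith) hxpQ) hxp0
  · -- singW
    intro j
    rcases hfin j with hj | hj
    · -- j = 0 : use xs + 2ρP e
      refine ⟨xs + (2*ρP) • e, ?_, ?_, ?_⟩
      · intro i
        have hdist : dist (xs + (2*ρP) • e) xs = 2*ρP := by
          rw [dist_eq_norm, add_sub_cancel_left, norm_smul, Real.norm_eq_abs,
            abs_of_pos (by linarith), hnorme, mul_one]
        have hmem0 : xs + (2*ρP) • e ∈ U ⟨0, h00⟩ := by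
          apply hPsub0
          rw [mem_ball, hdist]
          linarith
        have hmem1 : xs + (2*ρP) • e ∉ U ⟨1, h01⟩ := by
          apply hPdis1
          rw [mem_ball, hdist]
          linarith
        rcases hfin i with h | h
        · rw [h, hj]
          simp only [iff_true]
          exact hmem0
        · rw [h, hj]
          constructor
          · intro hx; exact (hmem1 hx).elim
          · intro hx
            exact absurd (show (1:ℕ) = 0 from congrArg Fin.val hx) (by norm_num)
      · intro hmem
        rw [mem_ball, dist_eq_norm, add_sub_cancel_left, norm_smul, Real.norm_eq_abs,
          abs_of_pos (by linarith), hnorme, mul_one] at hmem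
        linarith
      · intro hmem
        have h0 : xs + (2*ρP) • e ∈ U ⟨0, h00⟩ := by
          apply hPsub0
          rw [mem_ball, dist_eq_norm, add_sub_cancel_left, norm_smul, Real.norm_eq_abs,
            abs_of_pos (by linarith), hnorme, mul_one]
          linarith
        exact hQdis0 _ (ball_subset_ball (by linarith) hmem) h0
    · -- j = 1 : use ys + 2ρQ e
      refine ⟨ys + (2*ρQ) • e, ?_, ?_, ?_⟩
      · intro i
        have hdist : dist (ys + (2*ρQ) • e) ys = 2*ρQ := by
          rw [dist_eq_norm, add_sub_cancel_left, norm_smul, Real.norm_eq_abs,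
            abs_of_pos (by linarith), hnorme, mul_one]
        have hmem1 : ys + (2*ρQ) • e ∈ U ⟨1, h01⟩ := by
          apply hQsub1
          rw [mem_ball, hdist]
          linarith
        have hmem0 : ys + (2*ρQ) • e ∉ U ⟨0, h00⟩ := by
          apply hQdis0
          rw [mem_ball, hdist]
          linarith
        rcases hfin i with h | h
        · rw [h, hj]
          constructor
          · intro hx; exact (hmem0 hx).elim
          · intro hx
            exact absurd (show (0:ℕ) = 1 from congrArg Fin.val hx) (by norm_num)
        · rw [h, hj]
          simp only [iff_true]
          exact hmem1
      · intro hmem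
        have h1 : ys + (2*ρQ) • e ∈ U ⟨1, h01⟩ := by
          apply hQsub1
          rw [mem_ball, dist_eq_norm, add_sub_cancel_left, norm_smul, Real.norm_eq_abs,
            abs_of_pos (by linarith), hnorme, mul_one]
          linarith
        exact hPdis1 _ (ball_subset_ball (by linarith) hmem) h1
      · intro hmem
        rw [mem_ball, dist_eq_norm, add_sub_cancel_left, norm_smul, Real.norm_eq_abs,
          abs_of_pos (by linarith), hnorme, mul_one] at hmem
        linarith
  · -- emptyW
    have hempty : (∅ : Finset (Fin (2*1))) ∈ codeOf U := by
      rw [hcode]; exact Or.inr (Or.inr (Or.inr (Or.inr rfl)))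
    obtain ⟨x, hx⟩ := hempty
    exact ⟨x, fun i hi => by simpa using (hx i).2 hi⟩

lemma no_realization_d0 {n : ℕ} (U : Fin (2*n) → Set (Euc 0)) (hn : 1 ≤ n)
    (hcode : codeOf U = Tcode n) : False := by
  have h00 : (0:ℕ) < 2*n := by omega
  have h1 : (∅ : Finset (Fin (2*n))) ∈ codeOf U := by
    rw [hcode]; exact Or.inr (Or.inr (Or.inr (Or.inr rfl)))
  have h2 : ({⟨0, h00⟩} : Finset (Fin (2*n))) ∈ codeOf U := by
    rw [hcode]; exact Or.inr (Or.inr (Or.inr (Or.inl ⟨⟨0, h00⟩, rfl⟩)))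
  obtain ⟨x, hx⟩ := h1
  obtain ⟨y, hy⟩ := h2
  have hxy : x = y := Subsingleton.elim x y
  have hmem : y ∈ U ⟨0, h00⟩ := (hy _).1 (Finset.mem_singleton_self _)
  have : (⟨0, h00⟩ : Fin (2*n)) ∈ (∅ : Finset (Fin (2*n))) := (hx _).2 (hxy ▸ hmem)
  simp at this

end TangledAux

/-- Monotonicity of the tangled sunflower codes: a realization of `T (n+1)` in `ℝ^d` gives
one of `T n` in `ℝ^d`, and a realization of `T n` in `ℝ^d` gives one of `T (n+1)` in
`ℝ^(d+1)`; hence `t n ≤ t (n+1) ≤ t n + 1`. -/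
theorem Tcode_monotone (n d : ℕ) (hn : 1 ≤ n) :
    (HasOpenRealization (2*(n+1)) (Tcode (n+1)) d →
      HasOpenRealization (2*n) (Tcode n) d) ∧
    (HasOpenRealization (2*n) (Tcode n) d →
      HasOpenRealization (2*(n+1)) (Tcode (n+1)) (d+1)) := by
  constructor
  · exact partA n d
  · intro h
    obtain ⟨U, R, hR, hUc, hUo, hcode, hUb⟩ := bounded_realization h
    refine transfer_realization _ ?_
    rcases Nat.lt_or_ge n 2 with hn2 | hn2
    · have hn1 : n = 1 := by omega
      subst hn1
      rcases Nat.eq_zero_or_pos d with hd0 | hd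
      · exfalso
        subst hd0
        exact no_realization_d0 U (by omega) hcode
      · exact partB_core U hUc hUo hcode R hR (PQW_of_one hd U hUc hUo hcode R hUb).some
    · exact partB_core U hUc hUo hcode R hR (PQW_of_two_le hn2 U hUc hUo hcode R hUb)
end

section
/- For all n ≥ 1, if the code T_n has an open convex realization in ℝ^d, then d ≥ ⌈n/2⌉. (That is, t_n := odim(T_n) ≥ ⌈n/2⌉, so the sequence t_n is unbounded.) -/
open Module Set RealInnerProductSpace
universe u

section Helpers
variable {V : Type u} [NormedAddCommGroup V] [InnerProductSpace ℝ V]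

lemma segment_reach {s : Set V} (hs : Convex ℝ s) {a b : V} (ha : a ∈ s) (hb : b ∈ s)
    (f : V →L[ℝ] ℝ) {c : ℝ} (hac : f a ≤ c) (hcb : c ≤ f b) : ∃ x ∈ s, f x = c := by
  by_cases hbc : f b = c
  · exact ⟨b, hb, hbc⟩
  have hlt : f a < f b := lt_of_le_of_lt hac (lt_of_le_of_ne hcb (Ne.symm hbc))
  have hd : 0 < f b - f a := by linarith
  set t : ℝ := (c - f a) / (f b - f a) with ht
  have ht0 : 0 ≤ t := div_nonneg (by linarith) hd.le
  have ht1 : t ≤ 1 := by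
    rw [div_le_one hd]; linarith [hcb, hbc]
  refine ⟨(1 - t) • a + t • b, hs ha hb (by linarith) ht0 (by ring), ?_⟩
  have : f ((1 - t) • a + t • b) = (1 - t) * f a + t * f b := by
    simp [map_add, map_smul, smul_eq_mul]
  rw [this, ht]
  field_simp
  ring

lemma isCompact_convexJoin {s t : Set V} (hs : IsCompact s) (ht : IsCompact t) :
    IsCompact (convexJoin ℝ s t) := by
  have himg : convexJoin ℝ s t =
      (fun q : ℝ × V × V => q.1 • q.2.1 + (1 - q.1) • q.2.2) ''
        (Icc (0:ℝ) 1 ×ˢ s ×ˢ t) := by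
    ext x
    constructor
    · rintro hx
      rw [mem_convexJoin] at hx
      obtain ⟨a, has, b, hbt, ca, cb, hca, hcb, hsum, rfl⟩ := hx
      exact ⟨(ca, a, b), ⟨⟨hca, by linarith⟩, has, hbt⟩, by simp; rw [show (1:ℝ) - ca = cb by linarith]⟩
    · rintro ⟨⟨θ, a, b⟩, ⟨⟨h0, h1⟩, has, hbt⟩, rfl⟩
      rw [mem_convexJoin]
      exact ⟨a, has, b, hbt, θ, 1 - θ, h0, by linarith, by ring, rfl⟩
  rw [himg]
  apply IsCompact.image
  · exact (isCompact_Icc.prod (hs.prod ht))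
  · fun_prop


lemma isCompact_convexHull_union {s t : Set V} (hs : IsCompact s) (ht : IsCompact t)
    (hcs : Convex ℝ s) (hct : Convex ℝ t) (hs0 : s.Nonempty) (ht0 : t.Nonempty) :
    IsCompact (convexHull ℝ (s ∪ t)) := by
  rw [hcs.convexHull_union hct hs0 ht0]
  exact isCompact_convexJoin hs ht


lemma restrict_hull {V : Type*} [NormedAddCommGroup V] [InnerProductSpace ℝ V]
    (W : Submodule ℝ V) {K : Set V} (hK : IsCompact K) (hc : Convex ℝ K) {v : V}
    (hsub : ∀ z ∈ K, z - v ∈ W)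
    (IH : ∀ {K' : Set ↥W}, IsCompact K' → Convex ℝ K' →
      K' ⊆ convexHull ℝ (K'.extremePoints ℝ)) :
    K ⊆ convexHull ℝ (K.extremePoints ℝ) := by
  classical
  set K' : Set ↥W := {w : ↥W | (w : V) + v ∈ K} with hK'def
  have him : Subtype.val '' K' = (fun z => z - v) '' K := by
    ext y
    constructor
    · rintro ⟨w, hw, rfl⟩
      exact ⟨(w : V) + v, hw, by simp⟩
    · rintro ⟨z, hz, rfl⟩
      exact ⟨⟨z - v, hsub z hz⟩, by simpa [K'] using hz, rfl⟩
  have hK' : IsCompact K' := by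
    rw [Subtype.isCompact_iff, him]
    exact hK.image (continuous_id.sub continuous_const)
  have hc' : Convex ℝ K' := by
    intro a ha b hb ca cb hca hcb hsum
    have hcb' : cb = 1 - ca := by linarith
    subst hcb'
    show ((ca • a + (1 - ca) • b : ↥W) : V) + v ∈ K
    have : ((ca • a + (1 - ca) • b : ↥W) : V) + v
        = ca • ((a : V) + v) + (1 - ca) • ((b : V) + v) := by
      push_cast
      module
    rw [this]
    exact hc ha hb hca (by linarith) (by ring)
  -- the affine embedding
  set ea : ↥W →ᵃ[ℝ] V :=
    { toFun := fun w => (w : V) + v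
      linear := W.subtype
      map_vadd' := by
        intro p u
        show ((u + p : ↥W) : V) + v = (u : V) +ᵥ ((p : V) + v)
        push_cast
        rw [vadd_eq_add]
        abel } with hea
  have heaapp : ∀ w : ↥W, ea w = (w : V) + v := fun _ => rfl
  intro x hx
  set w : ↥W := ⟨x - v, hsub x hx⟩ with hw
  have hwK' : w ∈ K' := by
    show (x - v) + v ∈ K
    simpa using hx
  have h1 : w ∈ convexHull ℝ (K'.extremePoints ℝ) := IH hK' hc' hwK'
  have h2 : ea w ∈ ea '' (convexHull ℝ (K'.extremePoints ℝ)) := ⟨w, h1, rfl⟩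
  rw [AffineMap.image_convexHull] at h2
  have hxw : ea w = x := by rw [heaapp]; show x - v + v = x; simp
  have hsubext : ea '' (K'.extremePoints ℝ) ⊆ K.extremePoints ℝ := by
    rintro _ ⟨u, hu, rfl⟩
    rw [mem_extremePoints] at hu
    obtain ⟨hu1, hu2⟩ := hu
    rw [mem_extremePoints]
    refine ⟨hu1, ?_⟩
    intro y hy z hz hseg
    obtain ⟨ca, cb, hca, hcb, hsum, hcomb⟩ := hseg
    set wy : ↥W := ⟨y - v, hsub y hy⟩
    set wz : ↥W := ⟨z - v, hsub z hz⟩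
    have hcb' : cb = 1 - ca := by linarith
    subst hcb'
    have hwu : ca • wy + (1 - ca) • wz = u := by
      apply Subtype.ext
      show ca • (y - v) + (1 - ca) • (z - v) = (u : V)
      have : ca • y + (1 - ca) • z = (u : V) + v := hcomb
      have h5 : ca • (y - v) + (1 - ca) • (z - v)
          = ca • y + (1 - ca) • z - v := by module
      rw [h5, this]
      abel
    have := hu2 wy (by show (y - v) + v ∈ K; simpa using hy)
      wz (by show (z - v) + v ∈ K; simpa using hz)
      ⟨ca, 1 - ca, hca, hcb, by ring, hwu⟩
    constructor
    · rw [← this.1]; show y = (y - v) + v; abel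
    · rw [← this.2]; show z = (z - v) + v; abel
  rw [← hxw]
  exact convexHull_mono hsubext h2


end Helpers


theorem mink : ∀ (n : ℕ) {V : Type u} [NormedAddCommGroup V] [InnerProductSpace ℝ V]
    [FiniteDimensional ℝ V], finrank ℝ V ≤ n → ∀ {K : Set V}, IsCompact K → Convex ℝ K →
    K ⊆ convexHull ℝ (K.extremePoints ℝ) := by
  intro n
  induction n with
  | zero =>
    intro V _ _ _ hr K hK hc x hx
    have : Subsingleton V := finrank_zero_iff.mp (Nat.le_zero.mp hr)
    have hxe : x ∈ K.extremePoints ℝ := mem_extremePoints.mpr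
      ⟨hx, fun y _ z _ _ => ⟨Subsingleton.elim _ _, Subsingleton.elim _ _⟩⟩
    exact subset_convexHull ℝ _ hxe
  | succ n IH =>
    intro V _ _ _ hr K hK hc
    by_cases hfr : finrank ℝ V = 0
    · intro x hx
      have : Subsingleton V := finrank_zero_iff.mp (Nat.le_zero.mp hfr.le)
      exact subset_convexHull ℝ _ (mem_extremePoints.mpr
        ⟨hx, fun y _ z _ _ => ⟨Subsingleton.elim _ _, Subsingleton.elim _ _⟩⟩)
    -- boundary points are in the hull of extreme points
    have hbdry : ∀ y ∈ K, y ∉ interior K → y ∈ convexHull ℝ (K.extremePoints ℝ) := by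
      intro y hy hyint
      by_cases hsp : affineSpan ℝ K = ⊤
      · -- interior nonempty, supporting hyperplane
        have hint : (interior K).Nonempty :=
          (hc.interior_nonempty_iff_affineSpan_eq_top).mpr hsp
        obtain ⟨φ, hφ⟩ := geometric_hahn_banach_open_point hc.interior isOpen_interior hyint
        obtain ⟨a₀, ha₀⟩ := hint
        have hKle : ∀ z ∈ K, φ z ≤ φ y := by
          intro z hz
          by_contra hlt
          push_neg at hlt
          have hay : φ a₀ < φ y := hφ a₀ ha₀
          set t : ℝ := (φ y - φ a₀) / (φ z - φ a₀) with htdef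
          have hzo : (0:ℝ) < φ z - φ a₀ := by linarith
      
          have ht0 : 0 < t := div_pos (by linarith) hzo
          have ht1 : t < 1 := by rw [div_lt_one hzo]; linarith
          have hmem : (1 - t) • a₀ + t • z ∈ openSegment ℝ a₀ z :=
            ⟨1 - t, t, by linarith, ht0, by ring, rfl⟩
          have hin : (1 - t) • a₀ + t • z ∈ interior K :=
            hc.openSegment_interior_closure_subset_interior ha₀ (subset_closure hz) hmem
          have := hφ _ hin
          have hval : φ ((1 - t) • a₀ + t • z) = φ y := by
            simp only [map_add, map_smul, smul_eq_mul]
            rw [htdef]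
            field_simp
            ring
          rw [hval] at this
          exact lt_irrefl _ this
        have hφne : φ ≠ 0 := by
          intro h0
          have := hφ a₀ ha₀
          rw [h0] at this
          simp only [ContinuousLinearMap.zero_apply, lt_self_iff_false] at this
        -- the exposed face
        set F : Set V := {z ∈ K | φ z = φ y} with hFdef
        have hFc : IsCompact F := hK.inter_right (isClosed_eq φ.continuous continuous_const)
        have hFcv : Convex ℝ F := hc.inter (convex_hyperplane (IsLinearMap.mk φ.map_add φ.map_smul) (φ y))
        have hyF : y ∈ F := ⟨hy, rfl⟩
        -- rank of the kernel
        have hsurj : Function.Surjective (φ : V →ₗ[ℝ] ℝ) := by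
          intro r
          have hne : φ y - φ a₀ ≠ 0 := sub_ne_zero.mpr (ne_of_gt (hφ a₀ ha₀))
          refine ⟨(r / (φ y - φ a₀)) • (y - a₀), ?_⟩
          show φ ((r / (φ y - φ a₀)) • (y - a₀)) = r
          rw [map_smul, map_sub]
          simp only [smul_eq_mul]
          field_simp
        have hker : finrank ℝ ↥(LinearMap.ker (φ : V →ₗ[ℝ] ℝ)) ≤ n := by
          have h1 := LinearMap.finrank_range_add_finrank_ker (φ : V →ₗ[ℝ] ℝ)
          rw [LinearMap.range_eq_top.mpr hsurj] at h1
          rw [finrank_top] at h1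
          have : finrank ℝ ℝ = 1 := finrank_self ℝ
          omega
        have hFsub : ∀ z ∈ F, z - y ∈ LinearMap.ker (φ : V →ₗ[ℝ] ℝ) := by
          intro z hz
          simp only [LinearMap.mem_ker, map_sub]
          have : φ z = φ y := hz.2
          simp only [ContinuousLinearMap.coe_coe]
          rw [this, sub_self]
        have hyhull : y ∈ convexHull ℝ (F.extremePoints ℝ) := by
          refine restrict_hull _ hFc hFcv hFsub (fun {K'} hK' hc' => IH ?_ hK' hc') hyF
          exact hker
        -- the face is extreme
        have hexp : IsExposed ℝ K F := by
          intro _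
          refine ⟨φ, ?_⟩
          ext z
          constructor
          · rintro ⟨hz1, hz2⟩
            exact ⟨hz1, fun w hw => by rw [hz2]; exact hKle w hw⟩
          · rintro ⟨hz1, hz2⟩
            exact ⟨hz1, le_antisymm (hKle z hz1) (hz2 y hy)⟩
        exact convexHull_mono hexp.isExtreme.extremePoints_subset_extremePoints hyhull
      · -- K lies in a proper affine subspace
        set W := (affineSpan ℝ K).direction with hWdef
        have hWne : W ≠ ⊤ := by
          intro hWt
          apply hsp
          rw [eq_top_iff]
          intro z _
          have hz : z = (z - y) +ᵥ y := by simp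
          rw [hz]
          refine AffineSubspace.vadd_mem_of_mem_direction ?_ (subset_affineSpan ℝ K hy)
          rw [show (affineSpan ℝ K).direction = ⊤ from hWt]
          trivial
        have hWr : finrank ℝ ↥W ≤ n := by
          have := Submodule.finrank_lt (K := ℝ) hWne
          omega
        have hsub : ∀ z ∈ K, z - y ∈ W := by
          intro z hz
          have := AffineSubspace.vsub_mem_direction (subset_affineSpan ℝ K hz)
            (subset_affineSpan ℝ K hy)
          simpa using this
        exact restrict_hull W hK hc hsub (fun {K'} hK' hc' => IH hWr hK' hc') hy
    -- now the general point
    intro x hx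
    by_cases hxi : x ∈ interior K
    · -- move along a line in both directions
      have : Nontrivial V := by
        have hpos : 0 < finrank ℝ V := Nat.pos_of_ne_zero hfr
        exact Module.nontrivial_of_finrank_pos hpos
      obtain ⟨u, hu⟩ := exists_ne (0 : V)
      have hun : 0 < ‖u‖ := norm_pos_iff.mpr hu
      set T : Set ℝ := {t : ℝ | x + t • u ∈ K} with hTdef
      have hT0 : (0:ℝ) ∈ T := by simp [T, hx]
      have hTc : IsClosed T := by
        have : T = (fun t : ℝ => x + t • u) ⁻¹' K :=  rfl
        rw [this]
        exact IsClosed.preimage (by fun_prop) hK.isClosed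
      obtain ⟨R, hR⟩ := isBounded_iff_forall_norm_le.mp hK.isBounded
      have hTbd : ∀ t ∈ T, |t| ≤ (R + ‖x‖) / ‖u‖ := by
        intro t ht
        have h1 : ‖x + t • u‖ ≤ R := hR _ ht
        have h2 : ‖t • u‖ ≤ ‖x + t • u‖ + ‖x‖ := by
          have := norm_sub_le (x + t • u) x
          simpa using this
        rw [norm_smul] at h2
        simp only [Real.norm_eq_abs] at h2
        rw [le_div_iff₀ hun]
        nlinarith
      have hTbdd : BddAbove T := ⟨(R + ‖x‖) / ‖u‖, fun t ht => (abs_le.mp (hTbd t ht)).2⟩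
      have hTbddb : BddBelow T := ⟨-((R + ‖x‖) / ‖u‖), fun t ht => (abs_le.mp (hTbd t ht)).1⟩
      set tp := sSup T with htp
      set tm := sInf T with htm
      have htpT : tp ∈ T := hTc.csSup_mem ⟨0, hT0⟩ hTbdd
      have htmT : tm ∈ T := hTc.csInf_mem ⟨0, hT0⟩ hTbddb
      have htp0 : 0 ≤ tp := le_csSup hTbdd hT0
      have htm0 : tm ≤ 0 := csInf_le hTbddb hT0
      have hybp : x + tp • u ∉ interior K := by
        intro hin
        rw [mem_interior_iff_mem_nhds, Metric.mem_nhds_iff] at hin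
        obtain ⟨ε, hε, hball⟩ := hin
        have hmem : x + (tp + ε / (2 * ‖u‖)) • u ∈ K := by
          apply hball
          rw [Metric.mem_ball, dist_eq_norm]
          have : x + (tp + ε / (2 * ‖u‖)) • u - (x + tp • u) = (ε / (2 * ‖u‖)) • u := by
            module
          rw [this, norm_smul]
          simp only [Real.norm_eq_abs]
          rw [abs_of_pos (by positivity)]
          have heq : ε / (2 * ‖u‖) * ‖u‖ = ε / 2 := by
            field_simp
          rw [heq]
          linarith
        have : tp + ε / (2 * ‖u‖) ≤ tp := le_csSup hTbdd hmem
        have : 0 < ε / (2 * ‖u‖) := by positivity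
        linarith
      have hybm : x + tm • u ∉ interior K := by
        intro hin
        rw [mem_interior_iff_mem_nhds, Metric.mem_nhds_iff] at hin
        obtain ⟨ε, hε, hball⟩ := hin
        have hmem : x + (tm - ε / (2 * ‖u‖)) • u ∈ K := by
          apply hball
          rw [Metric.mem_ball, dist_eq_norm]
          have : x + (tm - ε / (2 * ‖u‖)) • u - (x + tm • u) = -((ε / (2 * ‖u‖)) • u) := by
            module
          rw [this, norm_neg, norm_smul]
          simp only [Real.norm_eq_abs]
          rw [abs_of_pos (by positivity)]
          have heq : ε / (2 * ‖u‖) * ‖u‖ = ε / 2 := by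
            field_simp
          rw [heq]
          linarith
        have : tm ≤ tm - ε / (2 * ‖u‖) := csInf_le hTbddb hmem
        have : 0 < ε / (2 * ‖u‖) := by positivity
        linarith
      have htmtp : tm < tp := by
        rcases lt_or_eq_of_le (le_trans htm0 htp0) with h | h
        · exact h
        · exfalso
          have h1 : tp = 0 := le_antisymm (h ▸ htm0) htp0
          apply hybp
          rw [h1, zero_smul, add_zero]
          exact hxi
      set θ : ℝ := (-tm) / (tp - tm) with hθdef
      have hden : (0:ℝ) < tp - tm := by linarith
      have hθ0 : 0 ≤ θ := div_nonneg (by linarith) hden.le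
      have hθ1 : θ ≤ 1 := by rw [div_le_one hden]; linarith
      have hcoef : (1 - θ) * tm + θ * tp = 0 := by
        rw [hθdef]
        field_simp
        ring
      have hxseg : x ∈ segment ℝ (x + tm • u) (x + tp • u) := by
        refine ⟨1 - θ, θ, by linarith, hθ0, by ring, ?_⟩
        have hcombo : (1 - θ) • (x + tm • u) + θ • (x + tp • u)
            = x + ((1 - θ) * tm + θ * tp) • u := by
          module
        rw [hcombo, hcoef, zero_smul, add_zero]
      exact (convex_convexHull ℝ _).segment_subset
        (hbdry _ htmT hybm) (hbdry _ htpT hybp) hxseg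
    · exact hbdry x hx hxi


section Blame
variable {V : Type u} [NormedAddCommGroup V] [InnerProductSpace ℝ V] [FiniteDimensional ℝ V]


lemma blame {m : ℕ} (P : Fin m → Set V) (hc : ∀ i, IsCompact (P i))
    (hcv : ∀ i, Convex ℝ (P i)) {Q : Set V}
    (hQ : ∀ i j, i ≠ j → convexHull ℝ (P i ∪ P j) = Q) {v : V} (hvQ : v ∈ Q)
    (hvP : ∀ i, v ∉ P i) : m ≤ finrank ℝ V + 1 := by
  classical
  rcases le_or_gt m 1 with hm | hm
  · omega
  have : Nontrivial (Fin m) := Fin.nontrivial_iff_two_le.mpr hm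
  have hij : ∀ i : Fin m, ∃ j : Fin m, j ≠ i := fun i => exists_ne i
  -- all P i are nonempty
  have hPne : ∀ i, (P i).Nonempty := by
    intro i
    by_contra hemp
    rw [Set.not_nonempty_iff_eq_empty] at hemp
    obtain ⟨j, hj⟩ := hij i
    have := hQ i j (Ne.symm hj)
    rw [hemp, Set.empty_union, (hcv j).convexHull_eq] at this
    exact hvP j (this ▸ hvQ)
  obtain ⟨i₀, hi₀⟩ : ∃ i₀ : Fin m, True := ⟨⟨0, by omega⟩, trivial⟩
  obtain ⟨i₁, hi₁⟩ := hij i₀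
  -- Q is compact and convex
  have hQc : IsCompact Q := by
    rw [← hQ i₁ i₀ hi₁]
    exact isCompact_convexHull_union (hc i₁) (hc i₀) (hcv i₁) (hcv i₀) (hPne i₁) (hPne i₀)
  have hQcv : Convex ℝ Q := by
    rw [← hQ i₁ i₀ hi₁]
    exact convex_convexHull ℝ _
  have hPQ : ∀ i, P i ⊆ Q := by
    intro i
    obtain ⟨j, hj⟩ := hij i
    rw [← hQ i j (Ne.symm hj)]
    exact (Set.subset_union_left).trans (subset_convexHull ℝ _)
  -- extreme points of Q lie in every union of a pair
  have hext : ∀ i j, i ≠ j → Q.extremePoints ℝ ⊆ P i ∪ P j := by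
    intro i j hijne x hx
    have hxQ : x ∈ Q := hx.1
    rw [← hQ i j hijne, (hcv i).convexHull_union (hcv j) (hPne i) (hPne j),
      mem_convexJoin] at hxQ
    obtain ⟨a, ha, b, hb, ca, cb, hca, hcb, hsum, hcomb⟩ := hxQ
    rcases eq_or_lt_of_le hca with hca0 | hca0
    · right
      have hcb1 : cb = 1 := by linarith
      have : x = b := by rw [← hcomb, ← hca0, hcb1]; simp
      rw [this]; exact hb
    rcases eq_or_lt_of_le hcb with hcb0 | hcb0
    · left
      have hca1 : ca = 1 := by linarith
      have : x = a := by rw [← hcomb, ← hcb0, hca1]; simp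
      rw [this]; exact ha
    have hseg : x ∈ openSegment ℝ a b := ⟨ca, cb, hca0, hcb0, hsum, hcomb⟩
    have := (mem_extremePoints.mp hx).2 a (hPQ i ha) b (hPQ j hb) hseg
    left
    rw [← this.1]; exact ha
  -- Minkowski + Caratheodory
  have hvext : v ∈ convexHull ℝ (Q.extremePoints ℝ) :=
    mink (finrank ℝ V) le_rfl hQc hQcv hvQ
  rw [convexHull_eq_union] at hvext
  simp only [Set.mem_iUnion] at hvext
  obtain ⟨t, hts, hai, hvt⟩ := hvext
  -- each P i misses some point of t
  have hblame : ∀ i : Fin m, ∃ e ∈ t, e ∉ P i := by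
    intro i
    by_contra hcon
    push_neg at hcon
    have : (↑t : Set V) ⊆ P i := fun e he => hcon e he
    have : convexHull ℝ (↑t : Set V) ⊆ P i := convexHull_min this (hcv i)
    exact hvP i (this hvt)
  choose g hg1 hg2 using hblame
  have hginj : Function.Injective g := by
    intro i j hgij
    by_contra hne
    have hgi : g i ∈ Q.extremePoints ℝ := hts (hg1 i)
    rcases hext i j hne hgi with h | h
    · exact hg2 i h
    · rw [hgij] at h
      exact hg2 j h
  have h1 : m ≤ t.card := by
    have := Fintype.card_le_of_injective (fun i => (⟨g i, hg1 i⟩ : ↥t))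
      (fun i j h => hginj (congrArg Subtype.val h))
    simpa [Fintype.card_coe] using this
  have h2 : t.card ≤ finrank ℝ V + 1 := by
    have := hai.card_le_finrank_succ
    rw [Fintype.card_coe] at this
    exact this.trans (by
      have := Submodule.finrank_le (vectorSpan ℝ (Set.range ((↑) : ↥t → V)))
      omega)
  omega



lemma blame_restrict {m : ℕ} (W : Submodule ℝ V) (P : Fin m → Set V)
    (hc : ∀ i, IsCompact (P i)) (hcv : ∀ i, Convex ℝ (P i)) {Q : Set V}
    (hQ : ∀ i j, i ≠ j → convexHull ℝ (P i ∪ P j) = Q) {v : V} (hvQ : v ∈ Q)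
    (hvP : ∀ i, v ∉ P i) (hsub : ∀ z ∈ Q, z - v ∈ W) : m ≤ finrank ℝ ↥W + 1 := by
  classical
  rcases le_or_gt m 1 with hm | hm
  · omega
  have : Nontrivial (Fin m) := Fin.nontrivial_iff_two_le.mpr hm
  have hij : ∀ i : Fin m, ∃ j : Fin m, j ≠ i := fun i => exists_ne i
  have hPne : ∀ i, (P i).Nonempty := by
    intro i
    by_contra hemp
    rw [Set.not_nonempty_iff_eq_empty] at hemp
    obtain ⟨j, hj⟩ := hij i
    have := hQ i j (Ne.symm hj)
    rw [hemp, Set.empty_union, (hcv j).convexHull_eq] at this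
    exact hvP j (this ▸ hvQ)
  have hPQ : ∀ i, P i ⊆ Q := by
    intro i
    obtain ⟨j, hj⟩ := hij i
    rw [← hQ i j (Ne.symm hj)]
    exact (Set.subset_union_left).trans (subset_convexHull ℝ _)
  -- transported sets
  set P' : Fin m → Set ↥W := fun i => {w : ↥W | (w : V) + v ∈ P i} with hP'def
  set Q' : Set ↥W := {w : ↥W | (w : V) + v ∈ Q} with hQ'def
  have hPsub : ∀ i, ∀ z ∈ P i, z - v ∈ W := fun i z hz => hsub z (hPQ i hz)
  have him : ∀ i, Subtype.val '' P' i = (fun z => z - v) '' P i := by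
    intro i
    ext y
    constructor
    · rintro ⟨w, hw, rfl⟩
      exact ⟨(w : V) + v, hw, by simp⟩
    · rintro ⟨z, hz, rfl⟩
      exact ⟨⟨z - v, hPsub i z hz⟩, by simpa [P'] using hz, rfl⟩
  have hc' : ∀ i, IsCompact (P' i) := by
    intro i
    rw [Subtype.isCompact_iff, him i]
    exact (hc i).image (continuous_id.sub continuous_const)
  have hcv' : ∀ i, Convex ℝ (P' i) := by
    intro i a ha b hb ca cb hca hcb hsum
    have hcb' : cb = 1 - ca := by linarith
    subst hcb'
    show ((ca • a + (1 - ca) • b : ↥W) : V) + v ∈ P i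
    have : ((ca • a + (1 - ca) • b : ↥W) : V) + v
        = ca • ((a : V) + v) + (1 - ca) • ((b : V) + v) := by
      push_cast
      module
    rw [this]
    exact hcv i ha hb hca (by linarith) (by ring)
  have hQ' : ∀ i j, i ≠ j → convexHull ℝ (P' i ∪ P' j) = Q' := by
    intro i j hijne
    apply Subset.antisymm
    · -- hull into Q'
      have hQ'cv : Convex ℝ Q' := by
        intro a ha b hb ca cb hca hcb hsum
        have hcb' : cb = 1 - ca := by linarith
        subst hcb'
        show ((ca • a + (1 - ca) • b : ↥W) : V) + v ∈ Q
        have : ((ca • a + (1 - ca) • b : ↥W) : V) + v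
            = ca • ((a : V) + v) + (1 - ca) • ((b : V) + v) := by
          push_cast
          module
        rw [this]
        have hQcv : Convex ℝ Q := by
          rw [← hQ i j hijne]; exact convex_convexHull ℝ _
        exact hQcv ha hb hca (by linarith) (by ring)
      apply convexHull_min _ hQ'cv
      rintro w (hw | hw)
      · show (w : V) + v ∈ Q
        exact hPQ i hw
      · show (w : V) + v ∈ Q
        exact hPQ j hw
    · intro w hw
      have hwQ : (w : V) + v ∈ Q := hw
      rw [← hQ i j hijne, (hcv i).convexHull_union (hcv j) (hPne i) (hPne j),
        mem_convexJoin] at hwQ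
      obtain ⟨a, ha, b, hb, ca, cb, hca, hcb, hsum, hcomb⟩ := hwQ
      set wa : ↥W := ⟨a - v, hPsub i a ha⟩ with hwa
      set wb : ↥W := ⟨b - v, hPsub j b hb⟩ with hwb
      have hcomb' : ca • wa + cb • wb = w := by
        apply Subtype.ext
        show ca • (a - v) + cb • (b - v) = (w : V)
        have hcb' : cb = 1 - ca := by linarith
        subst hcb'
        have h5 : ca • (a - v) + (1 - ca) • (b - v)
            = ca • a + (1 - ca) • b - v := by module
        rw [h5, hcomb]
        abel
      have hseg : w ∈ segment ℝ wa wb := ⟨ca, cb, hca, hcb, hsum, hcomb'⟩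
      have h1 : wa ∈ P' i := by show (a - v) + v ∈ P i; simpa using ha
      have h2 : wb ∈ P' j := by show (b - v) + v ∈ P j; simpa using hb
      exact segment_subset_convexHull (Set.mem_union_left _ h1) (Set.mem_union_right _ h2) hseg
  have hv' : (0 : ↥W) ∈ Q' := by
    show ((0 : ↥W) : V) + v ∈ Q
    simpa using hvQ
  have hv'P : ∀ i, (0 : ↥W) ∉ P' i := by
    intro i hcon
    have : ((0 : ↥W) : V) + v ∈ P i := hcon
    simp only [Submodule.coe_zero, zero_add] at this
    exact hvP i this
  exact blame P' hc' hcv' hQ' hv' hv'P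

lemma dual_main {m : ℕ} (P : Fin m → Set V) (hc : ∀ i, IsCompact (P i))
    (hcv : ∀ i, Convex ℝ (P i)) {Q : Set V}
    (hQ : ∀ i j, i ≠ j → convexHull ℝ (P i ∪ P j) = Q) {v : V} (hvQ : v ∈ Q)
    (hvP : ∀ i, v ∉ P i) (hbd : v ∉ interior Q) (hrank : 1 ≤ finrank ℝ V) :
    m ≤ finrank ℝ V := by
  classical
  rcases le_or_gt m 1 with hm | hm
  · omega
  have : Nontrivial (Fin m) := Fin.nontrivial_iff_two_le.mpr hm
  have hij : ∀ i : Fin m, ∃ j : Fin m, j ≠ i := fun i => exists_ne i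
  have hPne : ∀ i, (P i).Nonempty := by
    intro i
    by_contra hemp
    rw [Set.not_nonempty_iff_eq_empty] at hemp
    obtain ⟨j, hj⟩ := hij i
    have := hQ i j (Ne.symm hj)
    rw [hemp, Set.empty_union, (hcv j).convexHull_eq] at this
    exact hvP j (this ▸ hvQ)
  have hPQ : ∀ i, P i ⊆ Q := by
    intro i
    obtain ⟨j, hj⟩ := hij i
    rw [← hQ i j (Ne.symm hj)]
    exact (Set.subset_union_left).trans (subset_convexHull ℝ _)
  obtain ⟨i₀, -⟩ : ∃ i₀ : Fin m, True := ⟨⟨0, by omega⟩, trivial⟩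
  obtain ⟨i₁, hi₁⟩ := hij i₀
  have hQcv : Convex ℝ Q := by
    rw [← hQ i₁ i₀ hi₁]; exact convex_convexHull ℝ _
  by_cases hint : (interior Q).Nonempty
  · -- supporting hyperplane at v
    obtain ⟨φ, hφ⟩ := geometric_hahn_banach_open_point hQcv.interior isOpen_interior hbd
    obtain ⟨a₀, ha₀⟩ := hint
    have hQle : ∀ z ∈ Q, φ z ≤ φ v := by
      intro z hz
      by_contra hlt
      push_neg at hlt
      have hay : φ a₀ < φ v := hφ a₀ ha₀
      set t : ℝ := (φ v - φ a₀) / (φ z - φ a₀) with htdef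
      have hzo : (0:ℝ) < φ z - φ a₀ := by linarith
      have ht0 : 0 < t := div_pos (by linarith) hzo
      have ht1 : t < 1 := by rw [div_lt_one hzo]; linarith
      have hmem : (1 - t) • a₀ + t • z ∈ openSegment ℝ a₀ z :=
        ⟨1 - t, t, by linarith, ht0, by ring, rfl⟩
      have hin : (1 - t) • a₀ + t • z ∈ interior Q :=
        hQcv.openSegment_interior_closure_subset_interior ha₀ (subset_closure hz) hmem
      have := hφ _ hin
      have hval : φ ((1 - t) • a₀ + t • z) = φ v := by
        simp only [map_add, map_smul, smul_eq_mul]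
        rw [htdef]
        field_simp
        ring
      rw [hval] at this
      exact lt_irrefl _ this
    -- the exposed face
    set F : Fin m → Set V := fun i => {z ∈ P i | φ z = φ v} with hFdef
    set FQ : Set V := {z ∈ Q | φ z = φ v} with hFQdef
    have hFc : ∀ i, IsCompact (F i) :=
      fun i => (hc i).inter_right (isClosed_eq φ.continuous continuous_const)
    have hFcv : ∀ i, Convex ℝ (F i) :=
      fun i => (hcv i).inter (convex_hyperplane (IsLinearMap.mk φ.map_add φ.map_smul) (φ v))
    have hFhull : ∀ i j, i ≠ j → convexHull ℝ (F i ∪ F j) = FQ := by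
      intro i j hijne
      apply Subset.antisymm
      · apply convexHull_min
        · rintro z (hz | hz)
          · exact ⟨hPQ i hz.1, hz.2⟩
          · exact ⟨hPQ j hz.1, hz.2⟩
        · exact hQcv.inter (convex_hyperplane (IsLinearMap.mk φ.map_add φ.map_smul) (φ v))
      · rintro z ⟨hzQ, hzφ⟩
        rw [← hQ i j hijne, (hcv i).convexHull_union (hcv j) (hPne i) (hPne j),
          mem_convexJoin] at hzQ
        obtain ⟨a, ha, b, hb, ca, cb, hca, hcb, hsum, hcomb⟩ := hzQ
        rcases eq_or_lt_of_le hca with hca0 | hca0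
        · have hcb1 : cb = 1 := by linarith
          have hzb : z = b := by rw [← hcomb, ← hca0, hcb1]; simp
          subst hzb
          exact subset_convexHull ℝ _ (Or.inr ⟨hb, hzφ⟩)
        rcases eq_or_lt_of_le hcb with hcb0 | hcb0
        · have hca1 : ca = 1 := by linarith
          have hza : z = a := by rw [← hcomb, ← hcb0, hca1]; simp
          subst hza
          exact subset_convexHull ℝ _ (Or.inl ⟨ha, hzφ⟩)
        -- both weights positive: each endpoint must be on the hyperplane
        have hφa : φ a ≤ φ v := hQle a (hPQ i ha)
        have hφb : φ b ≤ φ v := hQle b (hPQ j hb)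
        have hφz : ca * φ a + cb * φ b = φ v := by
          rw [← hzφ, ← hcomb]
          simp [map_add, map_smul, smul_eq_mul]
        have hba : cb * φ b ≤ cb * φ v := mul_le_mul_of_nonneg_left hφb hcb
        have hab : ca * φ a ≤ ca * φ v := mul_le_mul_of_nonneg_left hφa hca
        have hprod : ca * φ v + cb * φ v = φ v := by rw [← add_mul, hsum, one_mul]
        have h6 : ca * φ v ≤ ca * φ a := by linarith
        have h7 : cb * φ v ≤ cb * φ b := by linarith
        have hφa' : φ a = φ v := le_antisymm hφa (le_of_mul_le_mul_left h6 hca0)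
        have hφb' : φ b = φ v := le_antisymm hφb (le_of_mul_le_mul_left h7 hcb0)
        have hseg : z ∈ segment ℝ a b := ⟨ca, cb, hca, hcb, hsum, hcomb⟩
        have hmemA : a ∈ F i := ⟨ha, hφa'⟩
        have hmemB : b ∈ F j := ⟨hb, hφb'⟩
        exact segment_subset_convexHull (Set.mem_union_left _ hmemA)
          (Set.mem_union_right _ hmemB) hseg
    have hvFQ : v ∈ FQ := ⟨hvQ, rfl⟩
    have hvF : ∀ i, v ∉ F i := fun i hcon => hvP i hcon.1
    -- restrict to the kernel of φ
    have hφne : φ ≠ 0 := by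
      intro h0
      have := hφ a₀ ha₀
      rw [h0] at this
      simp only [ContinuousLinearMap.zero_apply, lt_self_iff_false] at this
    have hsurj : Function.Surjective (φ : V →ₗ[ℝ] ℝ) := by
      intro r
      have hne : φ v - φ a₀ ≠ 0 := sub_ne_zero.mpr (ne_of_gt (hφ a₀ ha₀))
      refine ⟨(r / (φ v - φ a₀)) • (v - a₀), ?_⟩
      show φ ((r / (φ v - φ a₀)) • (v - a₀)) = r
      rw [map_smul, map_sub]
      simp only [smul_eq_mul]
      field_simp
    have hker : finrank ℝ ↥(LinearMap.ker (φ : V →ₗ[ℝ] ℝ)) + 1 = finrank ℝ V := by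
      have h1 := LinearMap.finrank_range_add_finrank_ker (φ : V →ₗ[ℝ] ℝ)
      rw [LinearMap.range_eq_top.mpr hsurj, finrank_top] at h1
      have : finrank ℝ ℝ = 1 := finrank_self ℝ
      omega
    have hsub : ∀ z ∈ FQ, z - v ∈ LinearMap.ker (φ : V →ₗ[ℝ] ℝ) := by
      intro z hz
      simp only [LinearMap.mem_ker, map_sub, ContinuousLinearMap.coe_coe]
      rw [hz.2, sub_self]
    have := blame_restrict _ F hFc hFcv hFhull hvFQ hvF hsub
    omega
  · -- Q has empty interior, lies in a proper affine subspace
    rw [Set.not_nonempty_iff_eq_empty] at hint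
    have hsp : affineSpan ℝ Q ≠ ⊤ := by
      intro htop
      have := hQcv.interior_nonempty_iff_affineSpan_eq_top.mpr htop
      rw [hint] at this
      exact Set.not_nonempty_empty this
    set W := (affineSpan ℝ Q).direction with hWdef
    have hWne : W ≠ ⊤ := by
      intro hWt
      apply hsp
      rw [eq_top_iff]
      intro z _
      have hz : z = (z - v) +ᵥ v := by simp
      rw [hz]
      refine AffineSubspace.vadd_mem_of_mem_direction ?_ (subset_affineSpan ℝ Q hvQ)
      rw [show (affineSpan ℝ Q).direction = ⊤ from hWt]
      trivial
    have hWr : finrank ℝ ↥W < finrank ℝ V :=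
      Submodule.finrank_lt (K := ℝ) hWne
    have hsub : ∀ z ∈ Q, z - v ∈ W := by
      intro z hz
      have := AffineSubspace.vsub_mem_direction (subset_affineSpan ℝ Q hz)
        (subset_affineSpan ℝ Q hvQ)
      simpa using this
    have := blame_restrict W P hc hcv hQ hvQ hvP hsub
    omega

end Blame


section Side
variable {V : Type u} [NormedAddCommGroup V] [InnerProductSpace ℝ V] [FiniteDimensional ℝ V]


set_option maxHeartbeats 1000000 in
lemma side_bound {m : ℕ} (A : Fin m → Set V) (hAo : ∀ i, IsOpen (A i))
    (hAc : ∀ i, Convex ℝ (A i)) {E : Set V} (hEo : IsOpen E) (hEne : E.Nonempty)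
    (hEA : ∀ i, E ⊆ A i) (hAA : ∀ i j, i ≠ j → A i ∩ A j ⊆ E) (f : V →L[ℝ] ℝ)
    (hf : f ≠ 0) {c : ℝ} (hlub : IsLUB (f '' E) c)
    (hreach : ∀ i, ∃ x ∈ A i, f x = c) (hrank : 1 ≤ finrank ℝ V) :
    m ≤ finrank ℝ V := by
  classical
  rcases le_or_gt m 1 with hm | hm
  · omega
  -- Riesz representation
  set u : V := (InnerProductSpace.toDual ℝ V).symm f with hudef
  have hu : ∀ x : V, ⟪u, x⟫ = f x := fun x => InnerProductSpace.toDual_symm_apply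
  have hune : u ≠ 0 := by
    intro h0
    apply hf
    ext x
    have := hu x
    rw [h0, inner_zero_left] at this
    simpa using this.symm
  have hun : 0 < ‖u‖ := norm_pos_iff.mpr hune
  obtain ⟨p, hp⟩ := hEne
  obtain ⟨ρ, hρ, hball⟩ := Metric.isOpen_iff.mp hEo p hp
  have hfuu : f u = ‖u‖ ^ 2 := by rw [← hu u, real_inner_self_eq_norm_sq]
  -- f p < c
  have hfp : f p < c := by
    set δ : ℝ := ρ / (2 * ‖u‖) with hδdef
    have hδ : 0 < δ := by positivity
    have hx' : p + δ • u ∈ E := by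
      apply hball
      rw [Metric.mem_ball, dist_eq_norm]
      have : p + δ • u - p = δ • u := by abel
      rw [this, norm_smul, Real.norm_eq_abs, abs_of_pos hδ, hδdef]
      have h9 : ρ / (2 * ‖u‖) * ‖u‖ = ρ / 2 := by field_simp
      rw [h9]
      linarith
    have h1 : f (p + δ • u) ≤ c := hlub.1 ⟨_, hx', rfl⟩
    have h2 : f (p + δ • u) = f p + δ * ‖u‖ ^ 2 := by
      rw [map_add, map_smul, smul_eq_mul, hfuu]
    nlinarith [sq_nonneg ‖u‖, mul_pos hδ (pow_pos hun 2)]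
  set γ : ℝ := c - f p with hγdef
  have hγ : 0 < γ := by simp [hγdef]; linarith
  -- polar sets
  set P : Fin m → Set V := fun i => {y | ∀ x ∈ A i, ⟪y, x - p⟫ ≤ 1} with hPdef
  set PE : Set V := {y | ∀ x ∈ E, ⟪y, x - p⟫ ≤ 1} with hPEdef
  have hPsubPE : ∀ i, P i ⊆ PE := fun i y hy x hx => hy x (hEA i hx)
  have hPEbd : ∀ y ∈ PE, ‖y‖ ≤ 2 / ρ := by
    intro y hy
    rcases eq_or_ne y 0 with rfl | hyne
    · simp; positivity
    have hyn : 0 < ‖y‖ := norm_pos_iff.mpr hyne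
    have hxE : p + (ρ / 2) • (‖y‖⁻¹ • y) ∈ E := by
      apply hball
      rw [Metric.mem_ball, dist_eq_norm]
      have : p + (ρ / 2) • (‖y‖⁻¹ • y) - p = (ρ / 2) • (‖y‖⁻¹ • y) := by abel
      rw [this, norm_smul, norm_smul, Real.norm_eq_abs, Real.norm_eq_abs,
        abs_of_pos (by positivity : (0:ℝ) < ρ/2), abs_of_pos (by positivity)]
      rw [inv_mul_cancel₀ (ne_of_gt hyn)]
      linarith
    have := hy _ hxE
    have heq : p + (ρ / 2) • (‖y‖⁻¹ • y) - p = (ρ / 2) • (‖y‖⁻¹ • y) := by abel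
    rw [heq, real_inner_smul_right, real_inner_smul_right,
      real_inner_self_eq_norm_sq] at this
    have h3 : ρ / 2 * (‖y‖⁻¹ * ‖y‖ ^ 2) = ρ / 2 * ‖y‖ := by
      field_simp
    rw [h3] at this
    rw [le_div_iff₀ hρ]
    nlinarith [this]
  have hPEclosed : IsClosed PE := by
    have : PE = ⋂ x ∈ E, {y : V | ⟪y, x - p⟫ ≤ 1} := by
      ext y
      simp [PE, Set.mem_iInter₂]
    rw [this]
    exact isClosed_biInter fun x _ =>
      isClosed_le (Continuous.inner continuous_id continuous_const) continuous_const
  have hPclosed : ∀ i, IsClosed (P i) := by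
    intro i
    have : P i = ⋂ x ∈ A i, {y : V | ⟪y, x - p⟫ ≤ 1} := by
      ext y
      simp [P, Set.mem_iInter₂]
    rw [this]
    exact isClosed_biInter fun x _ =>
      isClosed_le (Continuous.inner continuous_id continuous_const) continuous_const
  have hPcomp : ∀ i, IsCompact (P i) := by
    intro i
    apply Metric.isCompact_of_isClosed_isBounded (hPclosed i)
    apply Bornology.IsBounded.subset _ (hPsubPE i)
    exact (Metric.isBounded_iff_subset_closedBall 0).mpr
      ⟨2 / ρ, fun y hy => by simpa [Metric.mem_closedBall, dist_eq_norm] using hPEbd y hy⟩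
  have hPcv : ∀ i, Convex ℝ (P i) := by
    intro i y1 h1 y2 h2 ca cb hca hcb hsum
    intro x hx
    rw [inner_add_left, real_inner_smul_left, real_inner_smul_left]
    have e1 := h1 x hx
    have e2 := h2 x hx
    nlinarith [mul_le_mul_of_nonneg_left e1 hca, mul_le_mul_of_nonneg_left e2 hcb]
  have hPEcv : Convex ℝ PE := by
    intro y1 h1 y2 h2 ca cb hca hcb hsum
    intro x hx
    rw [inner_add_left, real_inner_smul_left, real_inner_smul_left]
    have e1 := h1 x hx
    have e2 := h2 x hx
    nlinarith [mul_le_mul_of_nonneg_left e1 hca, mul_le_mul_of_nonneg_left e2 hcb]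
  have h0P : ∀ i, (0:V) ∈ P i := by
    intro i x hx
    rw [inner_zero_left]
    norm_num
  -- the distinguished point v
  set v : V := γ⁻¹ • u with hvdef
  have hvinner : ∀ z : V, ⟪v, z⟫ = γ⁻¹ * f z := by
    intro z
    rw [hvdef, real_inner_smul_left, hu]
  have hvPE : v ∈ PE := by
    intro x hx
    rw [hvinner, map_sub]
    have h1 : f x ≤ c := hlub.1 ⟨x, hx, rfl⟩
    have h2 : f x - f p ≤ γ := by rw [hγdef]; linarith
    calc γ⁻¹ * (f x - f p) ≤ γ⁻¹ * γ := by
          apply mul_le_mul_of_nonneg_left h2 (by positivity)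
      _ = 1 := inv_mul_cancel₀ (ne_of_gt hγ)
  have hvP : ∀ i, v ∉ P i := by
    intro i hv
    obtain ⟨xi, hxi, hfxi⟩ := hreach i
    obtain ⟨ε, hε, hballi⟩ := Metric.isOpen_iff.mp (hAo i) xi hxi
    set δ : ℝ := ε / (2 * ‖u‖) with hδdef
    have hδ : 0 < δ := by positivity
    have hx' : xi + δ • u ∈ A i := by
      apply hballi
      rw [Metric.mem_ball, dist_eq_norm]
      have : xi + δ • u - xi = δ • u := by abel
      rw [this, norm_smul, Real.norm_eq_abs, abs_of_pos hδ, hδdef]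
      have : ε / (2 * ‖u‖) * ‖u‖ = ε / 2 := by field_simp
      rw [this]
      linarith
    have := hv _ hx'
    rw [hvinner, map_sub, map_add, map_smul, smul_eq_mul, hfuu, hfxi] at this
    have hpos : 0 < δ * ‖u‖ ^ 2 := by positivity
    have h1 : γ⁻¹ * (c + δ * ‖u‖ ^ 2 - f p) = 1 + γ⁻¹ * (δ * ‖u‖ ^ 2) := by
      have hγe : c + δ * ‖u‖ ^ 2 - f p = γ + δ * ‖u‖ ^ 2 := by rw [hγdef]; ring
      rw [hγe, mul_add, inv_mul_cancel₀ (ne_of_gt hγ)]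
    rw [h1] at this
    nlinarith [mul_pos (inv_pos.mpr hγ) hpos]
  -- v is not interior
  have hvne : v ≠ 0 := smul_ne_zero (inv_ne_zero (ne_of_gt hγ)) hune
  have hvbd : v ∉ interior PE := by
    intro hv
    rw [mem_interior_iff_mem_nhds, Metric.mem_nhds_iff] at hv
    obtain ⟨ε, hε, hballv⟩ := hv
    have hvn : 0 < ‖v‖ := norm_pos_iff.mpr hvne
    set δ : ℝ := ε / (2 * ‖v‖) with hδdef
    have hδ : 0 < δ := by positivity
    have hv' : (1 + δ) • v ∈ PE := by
      apply hballv
      rw [Metric.mem_ball, dist_eq_norm]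
      have : (1 + δ) • v - v = δ • v := by module
      rw [this, norm_smul, Real.norm_eq_abs, abs_of_pos hδ, hδdef]
      have : ε / (2 * ‖v‖) * ‖v‖ = ε / 2 := by field_simp
      rw [this]
      linarith
    -- pick a point of E with f-value close to c
    have hth : f p + γ / (1 + δ) < c := by
      have : γ / (1 + δ) < γ := by
        rw [div_lt_iff₀ (by linarith)]
        nlinarith
      rw [hγdef] at *
      linarith
    obtain ⟨x, hxE, hfx⟩ : ∃ x ∈ E, f p + γ / (1 + δ) < f x := by
      by_contra hcon
      push_neg at hcon
      have hub : (f p + γ / (1 + δ)) ∈ upperBounds (⇑f '' E) := by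
        rintro a ⟨x, hx, rfl⟩
        exact hcon x hx
      have : c ≤ f p + γ / (1 + δ) := hlub.2 hub
      linarith
    have := hv' x hxE
    rw [real_inner_smul_left, hvinner, map_sub] at this
    have h2 : γ / (1 + δ) < f x - f p := by linarith
    have h3 : (1 + δ) * (γ⁻¹ * (f x - f p)) > 1 := by
      rw [← mul_assoc]
      have hγinv : 0 < γ⁻¹ := by positivity
      have : (1 + δ) * γ⁻¹ * (γ / (1 + δ)) = 1 := by
        field_simp
      calc (1:ℝ) = (1 + δ) * γ⁻¹ * (γ / (1 + δ)) := this.symm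
        _ < (1 + δ) * γ⁻¹ * (f x - f p) := by
            apply mul_lt_mul_of_pos_left h2 (by positivity)
    linarith
  -- pair hulls equal PE
  have hQpair : ∀ i j, i ≠ j → convexHull ℝ (P i ∪ P j) = PE := by
    intro i j hij
    apply Subset.antisymm
    · apply convexHull_min _ hPEcv
      exact Set.union_subset (hPsubPE i) (hPsubPE j)
    · intro g hg
      by_contra hgC
      set C : Set V := convexHull ℝ (P i ∪ P j) with hCdef
      have hCcomp : IsCompact C :=
        isCompact_convexHull_union (hPcomp i) (hPcomp j) (hPcv i) (hPcv j)
          ⟨0, h0P i⟩ ⟨0, h0P j⟩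
      obtain ⟨ψ, β, hψ1, hψ2⟩ :=
        geometric_hahn_banach_closed_point (convex_convexHull ℝ _) hCcomp.isClosed hgC
      have hβ : 0 < β := by
        have h0C : (0:V) ∈ C := subset_convexHull ℝ _ (Set.mem_union_left _ (h0P i))
        have := hψ1 0 h0C
        simpa using this
      set w : V := (InnerProductSpace.toDual ℝ V).symm ψ with hwdef
      have hw : ∀ x : V, ⟪w, x⟫ = ψ x := fun x => InnerProductSpace.toDual_symm_apply
      set xs : V := p + β⁻¹ • w with hxsdef
      have hxsp : xs - p = β⁻¹ • w := by rw [hxsdef]; abel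
      -- any petal whose polar is inside C has xs in its closure
      have key1 : ∀ k : Fin m, P k ⊆ C → xs ∈ closure (A k) := by
        intro k hPkC
        by_contra hxa
        obtain ⟨χ, τ, hχ1, hχ2⟩ :=
          geometric_hahn_banach_closed_point ((hAc k).closure) isClosed_closure hxa
        have hpk : χ p < τ := hχ1 p (subset_closure (hEA k hp))
        have hτp : 0 < τ - χ p := by linarith
        set wχ : V := (InnerProductSpace.toDual ℝ V).symm χ with hwχdef
        have hwχ : ∀ x : V, ⟪wχ, x⟫ = χ x := fun x => InnerProductSpace.toDual_symm_apply
        set y0 : V := (τ - χ p)⁻¹ • wχ with hy0def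
        have hy0 : y0 ∈ P k := by
          intro x hx
          rw [hy0def, real_inner_smul_left, hwχ, map_sub]
          have : χ x < τ := hχ1 x (subset_closure hx)
          have h4 : χ x - χ p ≤ τ - χ p := by linarith
          calc (τ - χ p)⁻¹ * (χ x - χ p) ≤ (τ - χ p)⁻¹ * (τ - χ p) := by
                apply mul_le_mul_of_nonneg_left h4 (by positivity)
            _ = 1 := inv_mul_cancel₀ (ne_of_gt hτp)
        have hy0C : y0 ∈ C := hPkC hy0
        have h5 : ψ y0 < β := hψ1 y0 hy0C
        -- compute ⟪y0, xs - p⟫ two ways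
        have hc1 : ⟪y0, xs - p⟫ = β⁻¹ * ψ y0 := by
          rw [hxsp, real_inner_smul_right, real_inner_comm, hw]
        have hc2 : ⟪y0, xs - p⟫ = (τ - χ p)⁻¹ * (χ xs - χ p) := by
          rw [hy0def, real_inner_smul_left, hwχ, map_sub]
        have h6 : β⁻¹ * ψ y0 < 1 := by
          calc β⁻¹ * ψ y0 < β⁻¹ * β := by
                apply mul_lt_mul_of_pos_left h5 (by positivity)
            _ = 1 := inv_mul_cancel₀ (ne_of_gt hβ)
        have h7 : 1 < (τ - χ p)⁻¹ * (χ xs - χ p) := by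
          have h8 : τ - χ p < χ xs - χ p := by linarith
          calc (1:ℝ) = (τ - χ p)⁻¹ * (τ - χ p) := (inv_mul_cancel₀ (ne_of_gt hτp)).symm
            _ < (τ - χ p)⁻¹ * (χ xs - χ p) := by
                apply mul_lt_mul_of_pos_left h8 (by positivity)
        rw [hc1] at hc2
        linarith
      have hxsi : xs ∈ closure (A i) :=
        key1 i ((Set.subset_union_left).trans (subset_convexHull ℝ _))
      have hxsj : xs ∈ closure (A j) :=
        key1 j ((Set.subset_union_right).trans (subset_convexHull ℝ _))
      -- xs is in the closure of E
      have hxscl : xs ∈ closure E := by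
        have hseg : openSegment ℝ p xs ⊆ E := by
          intro z hz
          have hpi : p ∈ interior (A i) := by
            rw [(hAo i).interior_eq]
            exact hEA i hp
          have hpj : p ∈ interior (A j) := by
            rw [(hAo j).interior_eq]
            exact hEA j hp
          have hzi : z ∈ interior (A i) :=
            (hAc i).openSegment_interior_closure_subset_interior hpi hxsi hz
          have hzj : z ∈ interior (A j) :=
            (hAc j).openSegment_interior_closure_subset_interior hpj hxsj hz
          exact hAA i j hij ⟨interior_subset hzi, interior_subset hzj⟩
        -- approach xs along the open segment
        have h1 : Filter.Tendsto (fun k : ℕ => (1/((k:ℝ)+1)) • p + (1 - 1/((k:ℝ)+1)) • xs)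
            Filter.atTop (nhds xs) := by
          have h0 : Filter.Tendsto (fun k : ℕ => 1/((k:ℝ)+1)) Filter.atTop (nhds 0) :=
            tendsto_one_div_add_atTop_nhds_zero_nat
          have h2 : Filter.Tendsto (fun k : ℕ => ((1:ℝ) - 1/((k:ℝ)+1))) Filter.atTop
              (nhds ((1:ℝ) - 0)) := (tendsto_const_nhds (x := (1:ℝ))).sub h0
          have := (h0.smul_const p).add (h2.smul_const xs)
          simpa using this
        apply mem_closure_of_tendsto h1
        rw [Filter.eventually_atTop]
        refine ⟨1, fun k hk => ?_⟩
        apply hseg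
        have hk1 : 0 < 1/((k:ℝ)+1) := by positivity
        have hk2 : 1/((k:ℝ)+1) < 1 := by
          rw [div_lt_one (by positivity)]
          have : (1:ℝ) ≤ (k:ℝ) := by exact_mod_cast hk
          linarith
        exact ⟨1/((k:ℝ)+1), 1 - 1/((k:ℝ)+1), hk1, by linarith, by ring, rfl⟩
      -- contradiction with g ∈ PE
      have hgcl : ⟪g, xs - p⟫ ≤ 1 := by
        have hclsub : closure E ⊆ {x : V | ⟪g, x - p⟫ ≤ 1} := by
          apply closure_minimal _ (isClosed_le (Continuous.inner continuous_const (continuous_id.sub continuous_const)) continuous_const)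
          exact fun x hx => hg x hx
        exact hclsub hxscl
      have hgval : ⟪g, xs - p⟫ = β⁻¹ * ψ g := by
        rw [hxsp, real_inner_smul_right, real_inner_comm, hw]
      have : 1 < β⁻¹ * ψ g := by
        calc (1:ℝ) = β⁻¹ * β := (inv_mul_cancel₀ (ne_of_gt hβ)).symm
          _ < β⁻¹ * ψ g := by apply mul_lt_mul_of_pos_left hψ2 (by positivity)
      rw [hgval] at hgcl
      linarith
  exact dual_main P hPcomp hPcv hQpair hvPE hvP hvbd hrank

end Side



set_option maxHeartbeats 1000000 in
/-- Any open convex realization of `T n` requires dimension at least `⌈n/2⌉`. -/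
theorem Tcode_lower_bound (n d : ℕ) (hn : 1 ≤ n)
    (h : HasOpenRealization (2*n) (Tcode n) d) : (n + 1) / 2 ≤ d := by
  classical
  set V := EuclideanSpace ℝ (Fin d) with hVdef
  obtain ⟨U, hUconv, hUopen, hUcode⟩ := h
  have hfinrank : finrank ℝ V = d := finrank_euclideanSpace_fin
  have hmem : ∀ σ ∈ Tcode n, ∃ x, ∀ i, (i ∈ σ ↔ x ∈ U i) := by
    intro σ hσ
    rw [← hUcode] at hσ
    exact hσ
  -- the distinguished neurons
  set eA : Fin n → Fin (2*n) := fun k => ⟨2*k.1, by have := k.isLt; omega⟩ with heAdef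
  set eB : Fin n → Fin (2*n) := fun k => ⟨2*k.1+1, by have := k.isLt; omega⟩ with heBdef
  set A : Fin n → Set V := fun k => U (eA k) with hAdef
  set B : Fin n → Set V := fun k => U (eB k) with hBdef
  -- realizing points
  obtain ⟨p, hp⟩ := hmem _ (Or.inr (Or.inl rfl))
  obtain ⟨q, hq⟩ := hmem _ (Or.inr (Or.inr (Or.inl rfl)))
  have hp' : ∀ i : Fin (2*n), (i.1 % 2 = 0 ↔ p ∈ U i) := by
    intro i
    have := hp i
    simpa using this
  have hq' : ∀ i : Fin (2*n), (i.1 % 2 = 1 ↔ q ∈ U i) := by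
    intro i
    have := hq i
    simpa using this
  have hzall : ∀ k : Fin n, ∃ x, ∀ i, (i ∈ ({eA k, eB k} : Finset (Fin (2*n))) ↔ x ∈ U i) :=
    fun k => hmem _ (Or.inl ⟨k, rfl⟩)
  choose z hz using hzall
  have hz' : ∀ (k : Fin n) (i : Fin (2*n)), ((i = eA k ∨ i = eB k) ↔ z k ∈ U i) := by
    intro k i
    have := hz k i
    simpa [Finset.mem_insert, Finset.mem_singleton] using this
  have hpA : ∀ k, p ∈ A k := fun k => (hp' (eA k)).mp (by show 2*k.1 % 2 = 0; omega)
  have hpB : ∀ k, p ∉ B k := by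
    intro k hx
    have := (hp' (eB k)).mpr hx
    have h2 : (2*k.1+1) % 2 = 0 := this
    omega
  have hqB : ∀ k, q ∈ B k := fun k => (hq' (eB k)).mp (by show (2*k.1+1) % 2 = 1; omega)
  have hqA : ∀ k, q ∉ A k := by
    intro k hx
    have := (hq' (eA k)).mpr hx
    have h2 : (2*k.1) % 2 = 1 := this
    omega
  have hzA : ∀ k, z k ∈ A k := fun k => (hz' k (eA k)).mp (Or.inl rfl)
  have hzB : ∀ k, z k ∈ B k := fun k => (hz' k (eB k)).mp (Or.inr rfl)
  -- dimension is at least 1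
  have hd1 : 1 ≤ d := by
    by_contra hd
    have hd0 : d = 0 := by omega
    have h0 : finrank ℝ V = 0 := by rw [hfinrank, hd0]
    have hsub : Subsingleton V := finrank_zero_iff.mp h0
    have hpq : p = q := Subsingleton.elim p q
    have k0 : Fin n := ⟨0, by omega⟩
    exact hpB k0 (hpq ▸ hqB k0)
  rcases le_or_gt n 1 with hn1 | hn2
  · omega
  -- from here on, n ≥ 2
  -- codewords of arbitrary points
  have hcw : ∀ x : V, ∃ σ ∈ Tcode n, ∀ i, (i ∈ σ ↔ x ∈ U i) := by
    intro x
    refine ⟨Finset.univ.filter (fun i => x ∈ U i), ?_, ?_⟩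
    · rw [← hUcode]
      exact ⟨x, fun i => by simp⟩
    · intro i
      simp
  -- the key elimination
  have key : ∀ (x : V) (i j : Fin (2*n)), i ≠ j → x ∈ U i → x ∈ U j →
      (∀ i', x ∈ U i' ↔ i'.1 % 2 = 0) ∨ (∀ i', x ∈ U i' ↔ i'.1 % 2 = 1) ∨
      (∃ k : Fin n, (i.1 = 2*k.1 ∨ i.1 = 2*k.1+1) ∧ (j.1 = 2*k.1 ∨ j.1 = 2*k.1+1)) := by
    intro x i j hij hxi hxj
    obtain ⟨σ, hσT, hσ⟩ := hcw x
    rcases hσT with ⟨k, rfl⟩ | rfl | rfl | ⟨i₀, rfl⟩ | rfl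
    · right; right
      refine ⟨k, ?_, ?_⟩
      · have := (hσ i).mpr hxi
        simp only [Finset.mem_insert, Finset.mem_singleton] at this
        rcases this with h | h
        · left; rw [h]
        · right; rw [h]
      · have := (hσ j).mpr hxj
        simp only [Finset.mem_insert, Finset.mem_singleton] at this
        rcases this with h | h
        · left; rw [h]
        · right; rw [h]
    · left
      intro i'
      rw [← hσ i']
      simp
    · right; left
      intro i'
      rw [← hσ i']
      simp
    · exfalso
      have h1 := (hσ i).mpr hxi
      have h2 := (hσ j).mpr hxj
      rw [Finset.mem_singleton] at h1 h2
      exact hij (h1.trans h2.symm)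
    · exact absurd ((hσ i).mpr hxi) (by simp)
  -- cores
  set E : Set V := ⋂ k, A k with hEdef
  set O : Set V := ⋂ k, B k with hOdef
  have hEopen : IsOpen E := isOpen_iInter_of_finite (fun k => hUopen _)
  have hOopen : IsOpen O := isOpen_iInter_of_finite (fun k => hUopen _)
  have hEconv : Convex ℝ E := convex_iInter (fun k => hUconv _)
  have hOconv : Convex ℝ O := convex_iInter (fun k => hUconv _)
  have hpE : p ∈ E := mem_iInter.mpr hpA
  have hqO : q ∈ O := mem_iInter.mpr hqB
  have hEsubA : ∀ k, E ⊆ A k := fun k => iInter_subset _ k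
  have hOsubB : ∀ k, O ⊆ B k := fun k => iInter_subset _ k
  have heAne : ∀ k l : Fin n, k ≠ l → eA k ≠ eA l := by
    intro k l hkl hc
    apply hkl
    apply Fin.ext
    have h1 := congrArg Fin.val hc
    have h2 : 2*k.1 = 2*l.1 := h1
    omega
  have heBne : ∀ k l : Fin n, k ≠ l → eB k ≠ eB l := by
    intro k l hkl hc
    apply hkl
    apply Fin.ext
    have h1 := congrArg Fin.val hc
    have h2 : 2*k.1+1 = 2*l.1+1 := h1
    omega
  -- sunflower conditions
  have hAAE : ∀ k l : Fin n, k ≠ l → A k ∩ A l ⊆ E := by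
    intro k l hkl x ⟨hx1, hx2⟩
    rcases key x (eA k) (eA l) (heAne k l hkl) hx1 hx2 with hch | hch | ⟨k', h1, h2⟩
    · apply mem_iInter.mpr
      intro j
      exact (hch (eA j)).mpr (by show 2*j.1 % 2 = 0; omega)
    · exfalso
      have := (hch (eA k)).mp hx1
      have h2 : (2*k.1) % 2 = 1 := this
      omega
    · exfalso
      have hkv : (eA k).1 = 2*k.1 := rfl
      have hlv : (eA l).1 = 2*l.1 := rfl
      rw [hkv] at h1
      rw [hlv] at h2
      have : k.1 = l.1 := by omega
      exact hkl (Fin.ext this)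
  have hBBO : ∀ k l : Fin n, k ≠ l → B k ∩ B l ⊆ O := by
    intro k l hkl x ⟨hx1, hx2⟩
    rcases key x (eB k) (eB l) (heBne k l hkl) hx1 hx2 with hch | hch | ⟨k', h1, h2⟩
    · exfalso
      have := (hch (eB k)).mp hx1
      have h2 : (2*k.1+1) % 2 = 0 := this
      omega
    · apply mem_iInter.mpr
      intro j
      exact (hch (eB j)).mpr (by show (2*j.1+1) % 2 = 1; omega)
    · exfalso
      have hkv : (eB k).1 = 2*k.1+1 := rfl
      have hlv : (eB l).1 = 2*l.1+1 := rfl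
      rw [hkv] at h1
      rw [hlv] at h2
      have : k.1 = l.1 := by omega
      exact hkl (Fin.ext this)
  -- E and O are disjoint
  set k0 : Fin n := ⟨0, by omega⟩ with hk0def
  set k1 : Fin n := ⟨1, by omega⟩ with hk1def
  have hEO : Disjoint E O := by
    rw [Set.disjoint_left]
    intro x hxE hxO
    have hx0 : x ∈ A k0 := hEsubA k0 hxE
    have hx1 : x ∈ A k1 := hEsubA k1 hxE
    have hxB0 : x ∈ B k0 := hOsubB k0 hxO
    have hk01 : (k0 : Fin n) ≠ k1 := by
      intro hc
      have h9 := congrArg Fin.val hc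
      rw [hk0def, hk1def] at h9
      simp at h9
    rcases key x (eA k0) (eA k1) (heAne k0 k1 hk01) hx0 hx1 with hch | hch | ⟨k', h1, h2⟩
    · have := (hch (eB k0)).mp hxB0
      have h2 : (2*(k0:Fin n).1+1) % 2 = 0 := this
      omega
    · have := (hch (eA k0)).mp hx0
      have h2 : (2*(k0:Fin n).1) % 2 = 1 := this
      omega
    · have hkv : (eA k0).1 = 2*(k0:Fin n).1 := rfl
      have hlv : (eA k1).1 = 2*(k1:Fin n).1 := rfl
      rw [hkv] at h1
      rw [hlv] at h2
      have hv0 : (k0 : Fin n).1 = 0 := rfl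
      have hv1 : (k1 : Fin n).1 = 1 := rfl
      rw [hv0] at h1
      rw [hv1] at h2
      omega
  -- separating functional
  obtain ⟨f, s, hfE, hfO⟩ :=
    geometric_hahn_banach_open_open hEconv hEopen hOconv hOopen hEO
  have hfps : f p < s := hfE p hpE
  have hfqs : s < f q := hfO q hqO
  have hfne : f ≠ 0 := by
    intro h0
    rw [h0] at hfps hfqs
    simp at hfps hfqs
    linarith
  -- the two critical levels
  set cA : ℝ := sSup (f '' E) with hcAdef
  set cB : ℝ := sInf (f '' O) with hcBdef
  have hlubA : IsLUB (f '' E) cA :=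
    isLUB_csSup ⟨f p, ⟨p, hpE, rfl⟩⟩ ⟨s, by rintro a ⟨x, hx, rfl⟩; exact (hfE x hx).le⟩
  have hglbB : IsGLB (f '' O) cB :=
    isGLB_csInf ⟨f q, ⟨q, hqO, rfl⟩⟩ ⟨s, by rintro a ⟨x, hx, rfl⟩; exact (hfO x hx).le⟩
  have hcAs : cA ≤ s := hlubA.2 (by rintro a ⟨x, hx, rfl⟩; exact (hfE x hx).le)
  have hscB : s ≤ cB := hglbB.2 (by rintro a ⟨x, hx, rfl⟩; exact (hfO x hx).le)
  have hfpcA : f p ≤ cA := hlubA.1 ⟨p, hpE, rfl⟩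
  have hcBfq : cB ≤ f q := hglbB.1 ⟨q, hqO, rfl⟩
  -- which petals reach which level
  set SA : Finset (Fin n) := Finset.univ.filter (fun k => ∃ x ∈ A k, f x = cA) with hSAdef
  set SB : Finset (Fin n) := Finset.univ.filter (fun k => ∃ x ∈ B k, f x = cB) with hSBdef
  have hcover : ∀ k : Fin n, k ∈ SA ∪ SB := by
    intro k
    rcases le_or_gt cA (f (z k)) with hk | hk
    · apply Finset.mem_union_left
      rw [hSAdef, Finset.mem_filter]
      exact ⟨Finset.mem_univ k, segment_reach (hUconv (eA k)) (hpA k) (hzA k) f hfpcA hk⟩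
    · apply Finset.mem_union_right
      rw [hSBdef, Finset.mem_filter]
      refine ⟨Finset.mem_univ k, segment_reach (hUconv (eB k)) (hzB k) (hqB k) f ?_ hcBfq⟩
      linarith
  have hcount : n ≤ SA.card + SB.card := by
    have h1 : (Finset.univ : Finset (Fin n)) ⊆ SA ∪ SB := fun k _ => hcover k
    have h2 := Finset.card_le_card h1
    rw [Finset.card_univ, Fintype.card_fin] at h2
    exact h2.trans (Finset.card_union_le _ _)
  -- apply the side bound to the A side
  have hrank : 1 ≤ finrank ℝ V := by rw [hfinrank]; exact hd1
  have hSAcard : SA.card ≤ d := by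
    rw [← hfinrank]
    set m := SA.card with hmdef
    set en : ↥SA ≃ Fin m := SA.equivFin with hendef
    set A' : Fin m → Set V := fun i => A ((en.symm i) : Fin n) with hA'def
    apply side_bound A' (fun i => hUopen _) (fun i => hUconv _) hEopen ⟨p, hpE⟩
      (fun i => hEsubA _) ?_ f hfne hlubA ?_ hrank
    · intro i j hij
      apply hAAE
      intro hc
      apply hij
      have := Subtype.ext hc
      exact en.symm.injective this
    · intro i
      obtain ⟨-, hx⟩ := Finset.mem_filter.mp ((en.symm i).2)
      exact hx
  -- apply the side bound to the B side
  have hSBcard : SB.card ≤ d := by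
    rw [← hfinrank]
    set m := SB.card with hmdef
    set en : ↥SB ≃ Fin m := SB.equivFin with hendef
    set B' : Fin m → Set V := fun i => B ((en.symm i) : Fin n) with hB'def
    have hlubB : IsLUB ((-f) '' O) (-cB) := by
      constructor
      · rintro a ⟨x, hx, rfl⟩
        have := hglbB.1 ⟨x, hx, rfl⟩
        show -f x ≤ -cB
        linarith
      · intro b hb
        have hlow : -b ∈ lowerBounds (f '' O) := by
          rintro a ⟨x, hx, rfl⟩
          have := hb ⟨x, hx, rfl⟩
          show -b ≤ f x
          simp only [ContinuousLinearMap.neg_apply] at this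
          linarith
        have := hglbB.2 hlow
        linarith
    apply side_bound B' (fun i => hUopen _) (fun i => hUconv _) hOopen ⟨q, hqO⟩
      (fun i => hOsubB _) ?_ (-f) ?_ hlubB ?_ hrank
    · intro i j hij
      apply hBBO
      intro hc
      apply hij
      have := Subtype.ext hc
      exact en.symm.injective this
    · intro h0
      apply hfne
      have := congrArg Neg.neg h0
      simpa using this
    · intro i
      obtain ⟨-, x, hx1, hx2⟩ := Finset.mem_filter.mp ((en.symm i).2)
      exact ⟨x, hx1, by simp [hx2]⟩
  omega
end
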